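/- arXiv:2409.15597 — 4 statements merged into one kernel-verified Lean document; each statement's English description precedes it below -/
import Mathlib

section
/- Fix σ > 0. For every sequence of parameter pairs (μ_m, 𝒯_m) with μ_m → ∞, 𝒯_m → ∞ and √(log 𝒯_m)/μ_m → 0: in the change-point model with change after time τ (X_1,…,X_τ i.i.d. N(0,1), X_{τ+1},…,X_{𝒯_m} i.i.d. N(μ_m, σ²), all independent) and CUSUM drift parameter μ_m, the supremum over integers 1 ≤ τ ≤ t ≤ 𝒯_m of P(max_{0≤k<τ} V_{t,k} ≥ max_{τ≤k≤t} V_{t,k}) tends to 0 as m → ∞; in particular the maximizer of k ↦ V_{t,k} over 0 ≤ k ≤ t lies in {τ,…,t} with probability tending to 1 uniformly in τ and t. -/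
open MeasureTheory ProbabilityTheory Filter Real

noncomputable section

/-- Partial sums of a path: `pS X 0 = 0`, `pS X t = X 1 + ⋯ + X t`. -/
def pS (X : ℕ → ℝ) (t : ℕ) : ℝ := ∑ i ∈ Finset.Icc 1 t, X i

/-- CUSUM quantity `V_{t,k}` with drift parameter μ. -/
def cusumV (μ : ℝ) (X : ℕ → ℝ) (t k : ℕ) : ℝ :=
  (pS X t - pS X k - μ / 2 * ((t : ℝ) - (k : ℝ))) * μ

/-- The value of the "mgf-type" integral for the standard Gaussian pdf. -/
lemma integral_exp_mul_gaussianPDFReal (a : ℝ) :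
    ∫ x, rexp (a * x) * gaussianPDFReal 0 1 x = rexp (a ^ 2 / 2) := by
  have hπ : (0 : ℝ) < Real.sqrt (2 * π) := Real.sqrt_pos.mpr (by positivity)
  have hpt : ∀ x : ℝ, rexp (a * x) * gaussianPDFReal 0 1 x
      = (Real.sqrt (2 * π))⁻¹ * rexp (a ^ 2 / 2) * rexp (-(1/2) * (x - a) ^ 2) := by
    intro x
    simp only [gaussianPDFReal, NNReal.coe_one, mul_one, sub_zero]
    rw [mul_comm (rexp (a * x)), mul_assoc, ← Real.exp_add, mul_assoc, ← Real.exp_add]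
    congr 1
    ring
  simp_rw [hpt]
  rw [MeasureTheory.integral_const_mul,
    integral_sub_right_eq_self (fun y => rexp (-(1/2) * y ^ 2)) a]
  have : ∫ x : ℝ, rexp (-(1/2) * x ^ 2) = Real.sqrt (2 * π) := by
    rw [integral_gaussian]
    congr 1
    ring
  rw [this, mul_comm ((Real.sqrt (2 * π))⁻¹), mul_assoc, inv_mul_cancel₀ hπ.ne', mul_one]

/-- Integrability of the mgf-type integrand. -/
lemma integrable_exp_mul_gaussianPDFReal (a : ℝ) :
    Integrable (fun x => rexp (a * x) * gaussianPDFReal 0 1 x) := by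
  have h1 : Integrable (fun x : ℝ => rexp (-(1/2 : ℝ) * x ^ 2)) :=
    integrable_exp_neg_mul_sq (by norm_num)
  have h2 : Integrable (fun x : ℝ => rexp (-(1/2 : ℝ) * (x - a) ^ 2)) := h1.comp_sub_right a
  have h3 := h2.const_mul ((Real.sqrt (2 * π))⁻¹ * rexp (a ^ 2 / 2))
  refine h3.congr (Filter.Eventually.of_forall fun x => ?_)
  simp only [gaussianPDFReal, NNReal.coe_one, mul_one, sub_zero]
  rw [mul_comm (rexp (a * x)), mul_assoc, ← Real.exp_add, mul_assoc, ← Real.exp_add]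
  congr 1
  ring

/-- Chernoff tail bound for the standard Gaussian. -/
lemma gauss_tail {a : ℝ} (ha : 0 ≤ a) :
    (gaussianReal 0 1 (Set.Ici a)).toReal ≤ rexp (-(a ^ 2) / 2) := by
  have hint := integrable_exp_mul_gaussianPDFReal a
  have key : ∫ x in Set.Ici a, gaussianPDFReal 0 1 x ≤ rexp (-(a ^ 2) / 2) := by
    have hb : ∀ x ∈ Set.Ici a, gaussianPDFReal 0 1 x
        ≤ rexp (-(a ^ 2)) * (rexp (a * x) * gaussianPDFReal 0 1 x) := by
      intro x hx
      have hx' : a ≤ x := hx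
      have h1 : (1 : ℝ) ≤ rexp (-(a ^ 2)) * rexp (a * x) := by
        rw [← Real.exp_add]
        calc (1 : ℝ) = rexp 0 := Real.exp_zero.symm
          _ ≤ _ := Real.exp_le_exp.mpr (by nlinarith)
      calc gaussianPDFReal 0 1 x = 1 * gaussianPDFReal 0 1 x := (one_mul _).symm
        _ ≤ (rexp (-(a ^ 2)) * rexp (a * x)) * gaussianPDFReal 0 1 x :=
            mul_le_mul_of_nonneg_right h1 (gaussianPDFReal_nonneg _ _ _)
        _ = rexp (-(a ^ 2)) * (rexp (a * x) * gaussianPDFReal 0 1 x) := by ring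
    calc ∫ x in Set.Ici a, gaussianPDFReal 0 1 x
        ≤ ∫ x in Set.Ici a, rexp (-(a ^ 2)) * (rexp (a * x) * gaussianPDFReal 0 1 x) :=
          setIntegral_mono_on (integrable_gaussianPDFReal 0 1).integrableOn
            (hint.const_mul _).integrableOn measurableSet_Ici hb
      _ ≤ ∫ x, rexp (-(a ^ 2)) * (rexp (a * x) * gaussianPDFReal 0 1 x) :=
          setIntegral_le_integral (hint.const_mul _)
            (Filter.Eventually.of_forall fun x => mul_nonneg (Real.exp_pos _).le
              (mul_nonneg (Real.exp_pos _).le (gaussianPDFReal_nonneg _ _ _)))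
      _ = rexp (-(a ^ 2)) * rexp (a ^ 2 / 2) := by
          rw [MeasureTheory.integral_const_mul, integral_exp_mul_gaussianPDFReal]
      _ = rexp (-(a ^ 2) / 2) := by rw [← Real.exp_add]; congr 1; ring
  rw [gaussianReal_apply_eq_integral 0 one_ne_zero (Set.Ici a),
    ENNReal.toReal_ofReal (setIntegral_nonneg measurableSet_Ici
      fun x _ => gaussianPDFReal_nonneg _ _ _)]
  exact key

/-- with μ_m → ∞, 𝒯_m → ∞, √(log 𝒯_m)/μ_m → 0, the probability that the CUSUM maximum over pre-change indices 0 ≤ k < τ dominates the maximum over post-change indices τ ≤ k ≤ t tends to 0 uniformly in 1 ≤ τ ≤ t ≤ 𝒯_m. -/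
theorem statement6 (σ : ℝ) (hσ : 0 < σ) (μs : ℕ → ℝ) (Ts : ℕ → ℕ)
    (hμ : Tendsto μs atTop atTop) (hT : Tendsto Ts atTop atTop)
    (hrate : Tendsto (fun m => Real.sqrt (Real.log (Ts m : ℝ)) / μs m) atTop (nhds 0)) :
    ∀ ε : ℝ, 0 < ε → ∃ M : ℕ, ∀ m : ℕ, M ≤ m →
      ∀ τ t : ℕ, 1 ≤ τ → τ ≤ t → t ≤ Ts m →
      ∀ (Ω : Type) [MeasurableSpace Ω] (P : Measure Ω) [IsProbabilityMeasure P]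
        (X : ℕ → Ω → ℝ), (∀ i, Measurable (X i)) →
      iIndepFun (fun i : ↥(Set.Icc 1 (Ts m)) => X (i : ℕ)) P →
      (∀ i, 1 ≤ i → i ≤ τ → Measure.map (X i) P = gaussianReal 0 1) →
      (∀ i, τ < i → i ≤ Ts m → Measure.map (X i) P = gaussianReal (μs m) ((σ ^ 2).toNNReal)) →
      (P {ω | (⨆ k : (Finset.Icc τ t : Finset ℕ), cusumV (μs m) (fun i => X i ω) t (k : ℕ)) ≤ ⨆ k : Fin τ, cusumV (μs m) (fun i => X i ω) t (k : ℕ)}).toReal ≤ ε := by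
  intro ε hε
  have hexp0 : Tendsto (fun m => rexp (-(μs m))) atTop (nhds 0) :=
    Real.tendsto_exp_atBot.comp (tendsto_neg_atTop_atBot.comp hμ)
  have hall : ∀ᶠ m in atTop, (16 ≤ μs m ∧ 1 ≤ Ts m) ∧
      (Real.sqrt (Real.log (Ts m : ℝ)) / μs m < 1/4 ∧ rexp (-(μs m)) < ε) :=
    ((hμ.eventually_ge_atTop 16).and (hT.eventually_ge_atTop 1)).and
      ((hrate.eventually (gt_mem_nhds (by norm_num))).and (hexp0.eventually (gt_mem_nhds hε)))
  obtain ⟨M, hM⟩ := eventually_atTop.mp hall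
  refine ⟨M, fun m hm τ t hτ1 hτt htT Ω _ P _ X hX hind hpre hpost => ?_⟩
  obtain ⟨⟨h16, hT1⟩, hsr, hexpε⟩ := hM m hm
  set μ := μs m with hμdef
  have hμpos : (0 : ℝ) < μ := by linarith
  -- Step 1: event inclusion into a union over single pre-change variables being large
  have hsub : {ω | (⨆ k : (Finset.Icc τ t : Finset ℕ), cusumV μ (fun i => X i ω) t (k : ℕ))
        ≤ ⨆ k : Fin τ, cusumV μ (fun i => X i ω) t (k : ℕ)}
      ⊆ ⋃ i ∈ Finset.Icc 1 τ, X i ⁻¹' Set.Ici (μ / 2) := by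
    intro ω hω
    simp only [Set.mem_setOf_eq] at hω
    set Y : ℕ → ℝ := fun i => X i ω with hY
    have hmem : τ ∈ Finset.Icc τ t := Finset.mem_Icc.mpr ⟨le_refl τ, hτt⟩
    have h1 : cusumV μ Y t τ ≤ ⨆ k : (Finset.Icc τ t : Finset ℕ), cusumV μ Y t (k : ℕ) :=
      le_ciSup (f := fun k : (Finset.Icc τ t : Finset ℕ) => cusumV μ Y t (k : ℕ))
        (Set.Finite.bddAbove (Set.finite_range _)) ⟨τ, hmem⟩
    haveI : Nonempty (Fin τ) := ⟨⟨0, hτ1⟩⟩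
    obtain ⟨k0, hk0⟩ := Finite.exists_max (fun k : Fin τ => cusumV μ Y t (k : ℕ))
    have h2 : (⨆ k : Fin τ, cusumV μ Y t (k : ℕ)) ≤ cusumV μ Y t (k0 : ℕ) := ciSup_le hk0
    have h3 : cusumV μ Y t τ ≤ cusumV μ Y t (k0 : ℕ) := h1.trans (hω.trans h2)
    have hk0τ : (k0 : ℕ) < τ := k0.2
    simp only [cusumV] at h3
    have h5 := le_of_mul_le_mul_right h3 hμpos
    have h4 : μ / 2 * ((τ : ℝ) - ((k0 : ℕ) : ℝ)) ≤ pS Y τ - pS Y (k0 : ℕ) := by linarith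
    have h10 : ∀ s : ℕ, Finset.Icc 1 s = Finset.Ioc 0 s := fun s => Finset.Icc_add_one_left_eq_Ioc 0 s
    have hsplit : pS Y (k0 : ℕ) + ∑ i ∈ Finset.Ioc (k0 : ℕ) τ, Y i = pS Y τ := by
      simp only [pS, h10]
      exact Finset.sum_Ioc_consecutive _ (Nat.zero_le _) hk0τ.le
    have hsum : ∑ _i ∈ Finset.Ioc (k0 : ℕ) τ, (μ / 2) ≤ ∑ i ∈ Finset.Ioc (k0 : ℕ) τ, Y i := by
      rw [Finset.sum_const, Nat.card_Ioc, nsmul_eq_mul, Nat.cast_sub hk0τ.le, mul_comm]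
      linarith
    have hne : (Finset.Ioc (k0 : ℕ) τ).Nonempty := Finset.nonempty_Ioc.mpr hk0τ
    obtain ⟨i, hi, hle⟩ := Finset.exists_le_of_sum_le hne hsum
    rw [Finset.mem_Ioc] at hi
    simp only [Set.mem_iUnion]
    exact ⟨i, Finset.mem_Icc.mpr ⟨by omega, hi.2⟩, hle⟩
  -- Step 2: union bound and identical Gaussian marginals
  have hbound : P {ω | (⨆ k : (Finset.Icc τ t : Finset ℕ), cusumV μ (fun i => X i ω) t (k : ℕ))
        ≤ ⨆ k : Fin τ, cusumV μ (fun i => X i ω) t (k : ℕ)}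
      ≤ (τ : ENNReal) * gaussianReal 0 1 (Set.Ici (μ / 2)) := by
    calc P _ ≤ P (⋃ i ∈ Finset.Icc 1 τ, X i ⁻¹' Set.Ici (μ / 2)) := measure_mono hsub
      _ ≤ ∑ i ∈ Finset.Icc 1 τ, P (X i ⁻¹' Set.Ici (μ / 2)) := measure_biUnion_finset_le _ _
      _ = ∑ _i ∈ Finset.Icc 1 τ, gaussianReal 0 1 (Set.Ici (μ / 2)) :=
          Finset.sum_congr rfl fun i hi => by
            rw [Finset.mem_Icc] at hi
            rw [← Measure.map_apply (hX i) measurableSet_Ici, hpre i hi.1 hi.2]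
      _ = (τ : ENNReal) * gaussianReal 0 1 (Set.Ici (μ / 2)) := by
          rw [Finset.sum_const, Nat.card_Icc, nsmul_eq_mul]
          norm_num
  have hGne : gaussianReal 0 1 (Set.Ici (μ / 2)) ≠ ⊤ := measure_ne_top _ _
  have htoReal : (P {ω | (⨆ k : (Finset.Icc τ t : Finset ℕ),
        cusumV μ (fun i => X i ω) t (k : ℕ))
        ≤ ⨆ k : Fin τ, cusumV μ (fun i => X i ω) t (k : ℕ)}).toReal
      ≤ (τ : ℝ) * (gaussianReal 0 1 (Set.Ici (μ / 2))).toReal := by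
    refine le_trans (ENNReal.toReal_mono (ENNReal.mul_ne_top (ENNReal.natCast_ne_top τ) hGne)
      hbound) ?_
    rw [ENNReal.toReal_mul]
    simp
  -- Step 3: numeric estimates
  have htail := gauss_tail (show (0 : ℝ) ≤ μ / 2 by linarith)
  have hτT : (τ : ℝ) ≤ (Ts m : ℝ) := Nat.cast_le.mpr (hτt.trans htT)
  have hTpos : (0 : ℝ) < (Ts m : ℝ) := by exact_mod_cast Nat.lt_of_lt_of_le Nat.zero_lt_one hT1
  have h1 : (τ : ℝ) * (gaussianReal 0 1 (Set.Ici (μ / 2))).toReal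
      ≤ (Ts m : ℝ) * rexp (-((μ / 2) ^ 2) / 2) :=
    mul_le_mul hτT htail ENNReal.toReal_nonneg (Nat.cast_nonneg _)
  have hlog : Real.log (Ts m : ℝ) ≤ μ ^ 2 / 16 := by
    have h0 : 0 ≤ Real.log (Ts m : ℝ) := Real.log_nonneg (by exact_mod_cast hT1)
    have hs : Real.sqrt (Real.log (Ts m : ℝ)) < μ / 4 := by
      rw [div_lt_iff₀ hμpos] at hsr
      linarith
    have hsq := Real.sq_sqrt h0
    nlinarith [Real.sqrt_nonneg (Real.log (Ts m : ℝ))]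
  have h2 : (Ts m : ℝ) * rexp (-((μ / 2) ^ 2) / 2) ≤ ε := by
    rw [show ((Ts m : ℝ)) = rexp (Real.log (Ts m : ℝ)) from (Real.exp_log hTpos).symm,
      ← Real.exp_add]
    have harg : Real.log (Ts m : ℝ) + (-((μ / 2) ^ 2) / 2) ≤ -μ := by
      nlinarith [mul_nonneg (show (0:ℝ) ≤ μ - 16 by linarith) hμpos.le]
    calc rexp (Real.log (Ts m : ℝ) + (-((μ / 2) ^ 2) / 2)) ≤ rexp (-μ) :=
        Real.exp_le_exp.mpr harg
      _ ≤ ε := hexpε.le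
  calc (P _).toReal ≤ (τ : ℝ) * (gaussianReal 0 1 (Set.Ici (μ / 2))).toReal := htoReal
    _ ≤ (Ts m : ℝ) * rexp (-((μ / 2) ^ 2) / 2) := h1
    _ ≤ ε := h2

end
end

section
/- Fix σ > 0. For every sequence of parameter pairs (μ_m, 𝒯_m) with μ_m → ∞, 𝒯_m → ∞ and √(log 𝒯_m)/μ_m → 0: in the change-point model with change after time τ (X_1,…,X_τ i.i.d. N(0,1), X_{τ+1},…,X_{𝒯_m} i.i.d. N(μ_m, σ²), all independent), the supremum over integers 1 ≤ τ < t ≤ 𝒯_m of P(max_{0≤k<τ} W_{t,k} ≥ max_{τ≤k<t} W_{t,k}) tends to 0 as m → ∞; in particular the maximizer of k ↦ W_{t,k} over 0 ≤ k < t lies in {τ,…,t−1} with probability tending to 1 uniformly in τ and t. -/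
open MeasureTheory ProbabilityTheory Filter Real

noncomputable section

/-- GLR quantity `W_{t,k} = |S_t − S_k|/√(t−k)`. -/
def glrW (X : ℕ → ℝ) (t k : ℕ) : ℝ := |pS X t - pS X k| / Real.sqrt ((t : ℝ) - (k : ℝ))

open scoped ENNReal NNReal

section Aux

lemma pdf_prod_eq (m₁ m₂ : ℝ) (v₁ v₂ : ℝ≥0) (hv₁ : v₁ ≠ 0) (hv₂ : v₂ ≠ 0) (x y : ℝ) :
    gaussianPDFReal m₁ v₁ x * gaussianPDFReal (m₂ + x) v₂ y
      = gaussianPDFReal (m₁ + m₂) (v₁ + v₂) y *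
        gaussianPDFReal (m₁ + (v₁ : ℝ) * (y - m₁ - m₂) / ((v₁ : ℝ) + v₂)) (v₁ * v₂ / (v₁ + v₂)) x := by
  have ha : (0:ℝ) < v₁ := by positivity
  have hb : (0:ℝ) < v₂ := by positivity
  have hab : (0:ℝ) < (v₁:ℝ) + v₂ := by linarith
  simp only [gaussianPDFReal, NNReal.coe_add, NNReal.coe_mul, NNReal.coe_div]
  conv_lhs => rw [mul_mul_mul_comm, ← mul_inv, ← Real.sqrt_mul (by positivity), ← Real.exp_add]
  conv_rhs => rw [mul_mul_mul_comm, ← mul_inv, ← Real.sqrt_mul (by positivity), ← Real.exp_add]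
  congr 2
  · field_simp
  · field_simp
    ring

lemma measurable_pdf2 (m₂ : ℝ) (v₂ : ℝ≥0) :
    Measurable (Function.uncurry fun x y => gaussianPDF (m₂ + x) v₂ y) := by
  apply Measurable.ennreal_ofReal
  simp only [gaussianPDFReal, Function.uncurry]
  fun_prop

lemma gaussian_conv (m₁ m₂ : ℝ) (v₁ v₂ : ℝ≥0) (hv₁ : v₁ ≠ 0) (hv₂ : v₂ ≠ 0) :
    ((gaussianReal m₁ v₁).prod (gaussianReal m₂ v₂)).map (fun p : ℝ × ℝ => p.1 + p.2)
      = gaussianReal (m₁ + m₂) (v₁ + v₂) := by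
  have hv : v₁ + v₂ ≠ 0 := fun h => hv₁ (by simpa using (add_eq_zero.mp h).1)
  have hmeas2 := measurable_pdf2 m₂ v₂
  ext s hs
  rw [Measure.map_apply (by fun_prop) hs, Measure.prod_apply (hs.preimage (by fun_prop))]
  have h1 : ∀ x : ℝ, (gaussianReal m₂ v₂) (Prod.mk x ⁻¹' ((fun p : ℝ × ℝ => p.1 + p.2) ⁻¹' s))
      = ∫⁻ y in s, gaussianPDF (m₂ + x) v₂ y := by
    intro x
    have : Prod.mk x ⁻¹' ((fun p : ℝ × ℝ => p.1 + p.2) ⁻¹' s) = (fun y => x + y) ⁻¹' s := rfl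
    rw [this, ← Measure.map_apply (by fun_prop) hs, gaussianReal_map_const_add,
      gaussianReal_apply _ hv₂]
  simp_rw [h1]
  rw [gaussianReal_of_var_ne_zero _ hv₁,
    lintegral_withDensity_eq_lintegral_mul _ (measurable_gaussianPDF _ _)
      (hmeas2.lintegral_prod_right (ν := volume.restrict s))]
  simp only [Pi.mul_apply]
  have h2 : ∀ x : ℝ, gaussianPDF m₁ v₁ x * ∫⁻ y in s, gaussianPDF (m₂ + x) v₂ y
      = ∫⁻ y in s, gaussianPDF m₁ v₁ x * gaussianPDF (m₂ + x) v₂ y := by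
    intro x
    rw [lintegral_const_mul _ (measurable_gaussianPDF _ _)]
  simp_rw [h2]
  rw [lintegral_lintegral_swap (((( measurable_gaussianPDF m₁ v₁).comp measurable_fst).mul hmeas2).aemeasurable)]
  have hv' : v₁ * v₂ / (v₁ + v₂) ≠ 0 := by
    rw [ne_eq, ← NNReal.coe_eq_zero, NNReal.coe_div, NNReal.coe_mul]
    have ha : (0:ℝ) < v₁ := by positivity
    have hb : (0:ℝ) < v₂ := by positivity
    positivity
  have h3 : ∀ y : ℝ, ∫⁻ x, gaussianPDF m₁ v₁ x * gaussianPDF (m₂ + x) v₂ y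
      = gaussianPDF (m₁ + m₂) (v₁ + v₂) y := by
    intro y
    have e1 : ∀ x : ℝ, gaussianPDF m₁ v₁ x * gaussianPDF (m₂ + x) v₂ y
        = gaussianPDF (m₁ + m₂) (v₁ + v₂) y *
          gaussianPDF (m₁ + (v₁ : ℝ) * (y - m₁ - m₂) / ((v₁ : ℝ) + v₂)) (v₁ * v₂ / (v₁ + v₂)) x := by
      intro x
      simp only [gaussianPDF]
      rw [← ENNReal.ofReal_mul (gaussianPDFReal_nonneg _ _ _),
        ← ENNReal.ofReal_mul (gaussianPDFReal_nonneg _ _ _),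
        pdf_prod_eq m₁ m₂ v₁ v₂ hv₁ hv₂ x y]
    simp_rw [e1]
    rw [lintegral_const_mul _ (measurable_gaussianPDF _ _), lintegral_gaussianPDF_eq_one _ hv',
      mul_one]
  simp_rw [h3]
  rw [gaussianReal_apply _ hv]

lemma gaussian_add {Ω : Type*} [MeasurableSpace Ω] {P : Measure Ω} [IsProbabilityMeasure P]
    {X Y : Ω → ℝ} (hX : Measurable X) (hY : Measurable Y) (h : IndepFun X Y P)
    {m₁ m₂ : ℝ} {v₁ v₂ : ℝ≥0} (hv₁ : v₁ ≠ 0) (hv₂ : v₂ ≠ 0)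
    (h₁ : P.map X = gaussianReal m₁ v₁) (h₂ : P.map Y = gaussianReal m₂ v₂) :
    P.map (X + Y) = gaussianReal (m₁ + m₂) (v₁ + v₂) := by
  have hprod : P.map (fun ω => (X ω, Y ω)) = (gaussianReal m₁ v₁).prod (gaussianReal m₂ v₂) := by
    rw [← h₁, ← h₂]
    exact (indepFun_iff_map_prod_eq_prod_map_map hX.aemeasurable hY.aemeasurable).mp h
  have : (X + Y) = (fun p : ℝ × ℝ => p.1 + p.2) ∘ (fun ω => (X ω, Y ω)) := rfl
  rw [this, ← Measure.map_map (by fun_prop) (by fun_prop), hprod,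
    gaussian_conv _ _ _ _ hv₁ hv₂]

lemma gaussian_sum {Ω : Type*} [MeasurableSpace Ω] {P : Measure Ω} [IsProbabilityMeasure P]
    {ι : Type*} {X : ι → Ω → ℝ} (hX : ∀ i, Measurable (X i))
    (h : iIndepFun X P) (m : ℝ) (v : ℝ≥0) (hv : v ≠ 0)
    (s : Finset ι) (hs : s.Nonempty) (hlaw : ∀ i ∈ s, P.map (X i) = gaussianReal m v) :
    P.map (∑ i ∈ s, X i) = gaussianReal (s.card * m) (s.card * v) := by
  induction hs using Finset.Nonempty.cons_induction with
  | singleton i =>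
      simp only [Finset.sum_singleton, Finset.card_singleton, Nat.cast_one, one_mul]
      exact hlaw i (Finset.mem_singleton_self i)
  | cons i s hi hs ih =>
      rw [Finset.sum_cons]
      have hcard : s.card ≠ 0 := Finset.card_ne_zero_of_mem hs.choose_spec
      have hvs : (s.card : ℝ≥0) * v ≠ 0 := by
        simp [hcard, hv]
      have hind : IndepFun (X i) (∑ j ∈ s, X j) P :=
        (h.indepFun_finset_sum_of_notMem hX hi).symm
      have := gaussian_add (hX i)
        (by rw [Finset.sum_fn]; exact Finset.measurable_sum s (fun j _ => hX j)) hind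
        hv hvs (hlaw i (Finset.mem_cons_self i s))
        (ih (fun j hj => hlaw j (Finset.mem_cons_of_mem hj)))
      rw [this, Finset.card_cons]
      push_cast
      ring_nf

lemma map_sum_Ioc {Ω : Type} [MeasurableSpace Ω] {P : Measure Ω} [IsProbabilityMeasure P]
    (T : ℕ) (X : ℕ → Ω → ℝ) (hmeas : ∀ i, Measurable (X i))
    (hindep : iIndepFun (fun i : ↥(Set.Icc 1 T) => X (i : ℕ)) P)
    (a b : ℕ) (hab : a < b) (hbT : b ≤ T) (m : ℝ) (v : ℝ≥0) (hv : v ≠ 0)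
    (hlaw : ∀ i, a < i → i ≤ b → P.map (X i) = gaussianReal m v) :
    P.map (fun ω => ∑ i ∈ Finset.Ioc a b, X i ω)
      = gaussianReal ((b - a : ℕ) * m) ((b - a : ℕ) * v) := by
  classical
  set s : Finset ↥(Set.Icc 1 T) := (Finset.Ioc a b).subtype (· ∈ Set.Icc 1 T) with hs_def
  have hmem : ∀ i ∈ Finset.Ioc a b, i ∈ Set.Icc 1 T := by
    intro i hi
    rw [Finset.mem_Ioc] at hi
    exact ⟨Nat.one_le_iff_ne_zero.mpr (by omega), le_trans hi.2 hbT⟩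
  have hsum : ∀ ω, ∑ i ∈ Finset.Ioc a b, X i ω = ∑ i ∈ s, X (i : ℕ) ω := by
    intro ω
    rw [hs_def, Finset.sum_subtype_eq_sum_filter (f := fun n => X n ω) (s := Finset.Ioc a b),
      Finset.filter_true_of_mem hmem]
  have hcard : s.card = b - a := by
    rw [hs_def, Finset.card_subtype, Finset.filter_true_of_mem hmem, Nat.card_Ioc]
  have hne : s.Nonempty := by
    rw [← Finset.card_pos, hcard]; omega
  have := gaussian_sum (X := fun i : ↥(Set.Icc 1 T) => X (i : ℕ)) (fun i => hmeas _)
    hindep m v hv s hne (fun i hi => by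
      refine hlaw _ ?_ ?_ <;>
      · have := Finset.mem_subtype.mp (hs_def ▸ hi)
        rw [Finset.mem_Ioc] at this
        omega)
  rw [hcard] at this
  rw [← this]
  congr 1
  ext ω
  simp only [Finset.sum_apply]
  exact hsum ω

lemma gauss_mgf (c : ℝ) :
    ∫⁻ x, ENNReal.ofReal (rexp (c * x)) ∂(gaussianReal 0 1) = ENNReal.ofReal (rexp (c^2/2)) := by
  rw [gaussianReal_of_var_ne_zero _ one_ne_zero,
    lintegral_withDensity_eq_lintegral_mul _ (measurable_gaussianPDF _ _)
      (by exact (measurable_id.const_mul c).exp.ennreal_ofReal)]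
  have h : ∀ x : ℝ, (gaussianPDF 0 1 * fun x => ENNReal.ofReal (rexp (c * x))) x
      = ENNReal.ofReal (rexp (c^2/2)) * gaussianPDF c 1 x := by
    intro x
    simp only [Pi.mul_apply, gaussianPDF]
    rw [← ENNReal.ofReal_mul (gaussianPDFReal_nonneg _ _ _),
      ← ENNReal.ofReal_mul (le_of_lt (exp_pos _))]
    congr 1
    simp only [gaussianPDFReal, NNReal.coe_one, mul_one]
    rw [mul_assoc, ← Real.exp_add, mul_comm (rexp _), mul_assoc, ← Real.exp_add]
    congr 2
    ring
  simp_rw [h]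
  rw [lintegral_const_mul _ (measurable_gaussianPDF _ _),
    lintegral_gaussianPDF_eq_one _ one_ne_zero, mul_one]

lemma std_tail (c : ℝ) (hc : 0 ≤ c) :
    gaussianReal 0 1 {x | c ≤ x} ≤ ENNReal.ofReal (rexp (-c^2/2)) := by
  have hmono : {x : ℝ | c ≤ x} ⊆ {x : ℝ | ENNReal.ofReal (rexp (c * c)) ≤ ENNReal.ofReal (rexp (c * x))} := by
    intro x hx
    simp only [Set.mem_setOf_eq] at *
    exact ENNReal.ofReal_le_ofReal (exp_le_exp.mpr (by nlinarith))
  have hmarkov := mul_meas_ge_le_lintegral₀ (μ := gaussianReal 0 1)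
    (f := fun x => ENNReal.ofReal (rexp (c * x)))
    (by exact ((measurable_id'.const_mul c).exp.ennreal_ofReal).aemeasurable)
    (ENNReal.ofReal (rexp (c * c)))
  rw [gauss_mgf] at hmarkov
  have h1 : gaussianReal 0 1 {x | c ≤ x}
      ≤ gaussianReal 0 1 {x : ℝ | ENNReal.ofReal (rexp (c * c)) ≤ ENNReal.ofReal (rexp (c * x))} :=
    measure_mono hmono
  have h2 : ENNReal.ofReal (rexp (c * c)) * gaussianReal 0 1 {x | c ≤ x}
      ≤ ENNReal.ofReal (rexp (c^2/2)) :=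
    le_trans (by exact mul_le_mul_right h1 _) hmarkov
  rw [mul_comm] at h2
  rw [← ENNReal.le_div_iff_mul_le (Or.inl (by simp [exp_pos])) (Or.inl ENNReal.ofReal_ne_top)] at h2
  refine h2.trans ?_
  rw [← ENNReal.ofReal_div_of_pos (exp_pos _), ← Real.exp_sub]
  apply ENNReal.ofReal_le_ofReal
  apply exp_le_exp.mpr
  nlinarith [sq_nonneg c]

lemma tail_upper (m : ℝ) (v : ℝ≥0) (hv : v ≠ 0) (c : ℝ) (hc : 0 ≤ c) :
    gaussianReal m v {x | m + c ≤ x} ≤ ENNReal.ofReal (rexp (-c^2/(2*v))) := by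
  have hvpos : (0:ℝ) < v := by positivity
  have hsv : (0:ℝ) < Real.sqrt v := Real.sqrt_pos.mpr hvpos
  have hmap : (gaussianReal 0 1).map (fun x => Real.sqrt v * x + m) = gaussianReal m v := by
    have h1 : (gaussianReal 0 1).map (fun x => Real.sqrt v * x)
        = gaussianReal 0 v := by
      rw [show (fun x => Real.sqrt v * x) = (Real.sqrt v * ·) from rfl,
        gaussianReal_map_const_mul]
      congr 1
      · ring
      · ext
        simp [Real.sq_sqrt hvpos.le]
    have : (fun x => Real.sqrt v * x + m) = (· + m) ∘ (fun x => Real.sqrt v * x) := rfl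
    rw [this, ← Measure.map_map (by fun_prop) (by fun_prop), h1, gaussianReal_map_add_const]
    simp
  rw [← hmap, Measure.map_apply (by fun_prop) (by exact measurableSet_le measurable_const measurable_id)]
  have hpre : (fun x => Real.sqrt v * x + m) ⁻¹' {x | m + c ≤ x} = {x | c / Real.sqrt v ≤ x} := by
    ext x
    simp only [Set.mem_preimage, Set.mem_setOf_eq]
    rw [div_le_iff₀ hsv]
    constructor
    · intro h; nlinarith
    · intro h; nlinarith
  rw [hpre]
  refine (std_tail _ (by positivity)).trans ?_
  apply ENNReal.ofReal_le_ofReal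
  apply exp_le_exp.mpr
  rw [div_pow, Real.sq_sqrt hvpos.le]
  rw [neg_div, neg_div, neg_le_neg_iff, div_div]
  apply le_of_eq
  ring

lemma tail_lower (m : ℝ) (v : ℝ≥0) (hv : v ≠ 0) (c : ℝ) (hc : 0 ≤ c) :
    gaussianReal m v {x | x ≤ m - c} ≤ ENNReal.ofReal (rexp (-c^2/(2*v))) := by
  have hmap : (gaussianReal m v).map (fun x => -1 * x) = gaussianReal (-m) v := by
    rw [show (fun x : ℝ => -1 * x) = ((-1 : ℝ) * ·) from rfl, gaussianReal_map_const_mul]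
    congr 1
    · ring
    · ext; simp
  have : {x : ℝ | x ≤ m - c} = (fun x => -1 * x) ⁻¹' {x | -m + c ≤ x} := by
    ext x
    simp only [Set.mem_preimage, Set.mem_setOf_eq]
    constructor <;> intro h <;> linarith
  rw [this, ← Measure.map_apply (by fun_prop) (by exact measurableSet_le measurable_const measurable_id),
    hmap]
  exact tail_upper (-m) v hv c hc

lemma tail_abs (v : ℝ≥0) (hv : v ≠ 0) (c : ℝ) (hc : 0 ≤ c) :
    gaussianReal 0 v {x | c ≤ |x|} ≤ 2 * ENNReal.ofReal (rexp (-c^2/(2*v))) := by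
  have hsub : {x : ℝ | c ≤ |x|} ⊆ {x | 0 + c ≤ x} ∪ {x | x ≤ 0 - c} := by
    intro x hx
    simp only [Set.mem_setOf_eq, Set.mem_union] at *
    rcases le_abs.mp hx with h | h
    · left; linarith
    · right; linarith
  refine (measure_mono hsub).trans ?_
  refine (measure_union_le _ _).trans ?_
  rw [two_mul]
  exact add_le_add (tail_upper 0 v hv c hc) (tail_lower 0 v hv c hc)

lemma det_core {μ a b D G : ℝ} (hμ : 1 ≤ μ) (ha : 1 ≤ a) (hb : 1 ≤ b)
    (hD : a * μ / 2 ≤ D) (hG : |G| < μ * Real.sqrt b / 6) :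
    |D + G| / Real.sqrt (a + b) < D / Real.sqrt a := by
  set A := Real.sqrt a with hA
  set B := Real.sqrt b with hB
  set C := Real.sqrt (a + b) with hC
  have hA1 : 1 ≤ A := by rw [hA, show (1:ℝ) = Real.sqrt 1 by simp]; exact Real.sqrt_le_sqrt ha
  have hB1 : 1 ≤ B := by rw [hB, show (1:ℝ) = Real.sqrt 1 by simp]; exact Real.sqrt_le_sqrt hb
  have hC0 : 0 ≤ C := Real.sqrt_nonneg _
  have hA2 : A^2 = a := Real.sq_sqrt (by linarith)
  have hB2 : B^2 = b := Real.sq_sqrt (by linarith)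
  have hC2 : C^2 = a + b := Real.sq_sqrt (by linarith)
  have hApos : 0 < A := by linarith
  have hCpos : 0 < C := by nlinarith
  have hCA : A ≤ C := by nlinarith
  have key : 3*A^2 + B ≤ 3*(A*C) := by
    have h9 : (3*A^2 + B)^2 ≤ (3*(A*C))^2 := by
      nlinarith [sq_nonneg (B - 1), sq_nonneg A, sq_nonneg (A*B - B)]
    have := Real.sqrt_le_sqrt h9
    rwa [Real.sqrt_sq (by positivity), Real.sqrt_sq (by positivity)] at this
  have hDpos : 0 < D := by nlinarith
  rw [div_lt_div_iff₀ hCpos hApos]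
  have h1 : |D + G| < D + μ * B / 6 := by
    calc |D + G| ≤ |D| + |G| := abs_add_le _ _
    _ < D + μ * B / 6 := by rw [abs_of_pos hDpos]; linarith
  calc |D + G| * A < (D + μ * B / 6) * A := by exact mul_lt_mul_of_pos_right h1 hApos
  _ ≤ D * C := by
      have k1 := mul_le_mul_of_nonneg_left key (by positivity : (0:ℝ) ≤ μ*A/6)
      have k2 := mul_nonneg (by nlinarith : (0:ℝ) ≤ D - A^2*μ/2) (by linarith : (0:ℝ) ≤ C - A)
      nlinarith [k1, k2]

lemma pS_diff (X : ℕ → ℝ) {k t : ℕ} (h : k ≤ t) :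
    pS X t - pS X k = ∑ i ∈ Finset.Ioc k t, X i := by
  unfold pS
  rw [show (1:ℕ) = 0 + 1 from rfl, Finset.Icc_add_one_left_eq_Ioc, Finset.Icc_add_one_left_eq_Ioc,
    ← Finset.sum_Ioc_consecutive X (Nat.zero_le k) h]
  ring

lemma event_incl (X : ℕ → ℝ) (τ t : ℕ) (hτ : 1 ≤ τ) (hτt : τ < t) (μ : ℝ) (hμ : 1 ≤ μ)
    (hD : ((t - τ : ℕ) : ℝ) * μ / 2 ≤ ∑ i ∈ Finset.Ioc τ t, X i)
    (hG : ∀ k, k < τ → |∑ i ∈ Finset.Ioc k τ, X i| < μ * Real.sqrt ((τ - k : ℕ)) / 6) :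
    (⨆ k : Fin τ, glrW X t (k : ℕ)) < ⨆ k : (Finset.Ico τ t : Finset ℕ), glrW X t (k : ℕ) := by
  set Dv := ∑ i ∈ Finset.Ioc τ t, X i with hDv
  have ha1 : (1:ℝ) ≤ ((t - τ : ℕ) : ℝ) := by
    have : 1 ≤ t - τ := by omega
    exact_mod_cast this
  have hDpos : 0 < Dv := by nlinarith
  have hcast_a : ((t - τ : ℕ) : ℝ) = (t : ℝ) - (τ : ℝ) := by
    push_cast [Nat.cast_sub hτt.le]; ring
  have hWτ : glrW X t τ = Dv / Real.sqrt ((t - τ : ℕ)) := by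
    rw [glrW, pS_diff X hτt.le, ← hDv, abs_of_pos hDpos, hcast_a]
  have hlt : ∀ k : Fin τ, glrW X t (k : ℕ) < glrW X t τ := by
    intro k
    have hk : (k : ℕ) < τ := k.2
    have hb1 : (1:ℝ) ≤ ((τ - (k:ℕ) : ℕ) : ℝ) := by
      have : 1 ≤ τ - (k:ℕ) := by omega
      exact_mod_cast this
    have hsplit : pS X t - pS X (k : ℕ) = Dv + ∑ i ∈ Finset.Ioc (k:ℕ) τ, X i := by
      rw [pS_diff X (by omega : (k:ℕ) ≤ t),
        ← Finset.sum_Ioc_consecutive X (le_of_lt hk) hτt.le, hDv]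
      ring
    have hcast_ab : (t : ℝ) - ((k:ℕ) : ℝ) = ((t - τ : ℕ) : ℝ) + ((τ - (k:ℕ) : ℕ) : ℝ) := by
      push_cast [Nat.cast_sub hτt.le, Nat.cast_sub (le_of_lt hk)]; ring
    rw [glrW, hsplit, hcast_ab, hWτ]
    exact det_core hμ ha1 hb1 hD (hG _ hk)
  haveI : Nonempty (Fin τ) := ⟨⟨0, hτ⟩⟩
  obtain ⟨k0, hk0⟩ := exists_eq_ciSup_of_finite (f := fun k : Fin τ => glrW X t (k : ℕ))
  have h1 : (⨆ k : Fin τ, glrW X t (k : ℕ)) < glrW X t τ := hk0 ▸ hlt k0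
  refine h1.trans_le ?_
  exact le_ciSup (f := fun k : (Finset.Ico τ t : Finset ℕ) => glrW X t (k : ℕ))
    (Set.Finite.bddAbove (Set.finite_range _)) (⟨τ, by simp [Finset.mem_Ico, hτt]⟩ : (Finset.Ico τ t : Finset ℕ))

end Aux

/-- with μ_m → ∞, 𝒯_m → ∞, √(log 𝒯_m)/μ_m → 0, the probability that the GLR maximum over pre-change indices 0 ≤ k < τ dominates the maximum over post-change indices τ ≤ k < t tends to 0 uniformly in 1 ≤ τ < t ≤ 𝒯_m. -/
theorem statement7 (σ : ℝ) (hσ : 0 < σ) (μs : ℕ → ℝ) (Ts : ℕ → ℕ)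
    (hμ : Tendsto μs atTop atTop) (hT : Tendsto Ts atTop atTop)
    (hrate : Tendsto (fun m => Real.sqrt (Real.log (Ts m : ℝ)) / μs m) atTop (nhds 0)) :
    ∀ ε : ℝ, 0 < ε → ∃ M : ℕ, ∀ m : ℕ, M ≤ m →
      ∀ τ t : ℕ, 1 ≤ τ → τ < t → t ≤ Ts m →
      ∀ (Ω : Type) [MeasurableSpace Ω] (P : Measure Ω) [IsProbabilityMeasure P]
        (X : ℕ → Ω → ℝ), (∀ i, Measurable (X i)) →
      iIndepFun (fun i : ↥(Set.Icc 1 (Ts m)) => X (i : ℕ)) P →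
      (∀ i, 1 ≤ i → i ≤ τ → Measure.map (X i) P = gaussianReal 0 1) →
      (∀ i, τ < i → i ≤ Ts m → Measure.map (X i) P = gaussianReal (μs m) ((σ ^ 2).toNNReal)) →
      (P {ω | (⨆ k : (Finset.Ico τ t : Finset ℕ), glrW (fun i => X i ω) t (k : ℕ)) ≤ ⨆ k : Fin τ, glrW (fun i => X i ω) t (k : ℕ)}).toReal ≤ ε := by
  intro ε hε
  have hσ2 : (((σ^2).toNNReal : ℝ≥0) : ℝ) = σ^2 := Real.coe_toNNReal _ (by positivity)
  have hσ2ne : (σ^2).toNNReal ≠ 0 := by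
    rw [ne_eq, ← NNReal.coe_eq_zero, hσ2]
    positivity
  have hμ2top : Tendsto (fun m => (μs m)^2) atTop atTop := by
    have := hμ.atTop_mul_atTop₀ hμ
    simpa [sq] using this
  have ht1 : Tendsto (fun m => rexp (-((μs m)^2/(8*σ^2)))) atTop (nhds 0) :=
    Real.tendsto_exp_atBot.comp (tendsto_neg_atTop_atBot.comp (hμ2top.atTop_div_const (by positivity)))
  have ht2 : Tendsto (fun m => 2 * rexp (-((μs m)^2/144))) atTop (nhds 0) := by
    have h0 : Tendsto (fun m => rexp (-((μs m)^2/144))) atTop (nhds 0) :=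
      Real.tendsto_exp_atBot.comp (tendsto_neg_atTop_atBot.comp (hμ2top.atTop_div_const (by norm_num)))
    simpa using h0.const_mul 2
  have E := ((ht1.eventually_lt_const (half_pos hε)).and
      (ht2.eventually_lt_const (half_pos hε))).and
      (((hμ.eventually_ge_atTop 1).and (hT.eventually_ge_atTop 1)).and
      (hrate.eventually_lt_const (show (0:ℝ) < 1/12 by norm_num)))
  obtain ⟨M, hM⟩ := eventually_atTop.mp E
  refine ⟨M, ?_⟩
  intro m hm τ t hτ hτt htT Ω _ P _ X hmeas hindep hlaw1 hlaw2
  obtain ⟨⟨h1, h2⟩, ⟨hμ1, hT1⟩, h5⟩ := hM m hm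
  have hμpos : (0:ℝ) < μs m := lt_of_lt_of_le one_pos hμ1
  have hTreal : (1:ℝ) ≤ (Ts m : ℝ) := by exact_mod_cast hT1
  have hlog0 : 0 ≤ Real.log (Ts m) := Real.log_nonneg hTreal
  have hsq : Real.sqrt (Real.log (Ts m)) < μs m / 12 := by
    rw [div_lt_iff₀ hμpos] at h5
    linarith
  have hlogle : Real.log (Ts m) ≤ (μs m)^2/144 := by
    have h' : Real.log (Ts m) = (Real.sqrt (Real.log (Ts m)))^2 := (Real.sq_sqrt hlog0).symm
    have h'' : (Real.sqrt (Real.log (Ts m)))^2 ≤ (μs m/12)^2 :=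
      pow_le_pow_left₀ (Real.sqrt_nonneg _) hsq.le 2
    rw [h']
    calc (Real.sqrt (Real.log (Ts m)))^2 ≤ (μs m/12)^2 := h''
    _ = (μs m)^2/144 := by ring
  have hTexp : (Ts m : ℝ) * rexp (-((μs m)^2/72)) ≤ rexp (-((μs m)^2/144)) := by
    rw [show (Ts m:ℝ) = rexp (Real.log (Ts m)) from (Real.exp_log (by linarith)).symm,
      ← Real.exp_add]
    apply exp_le_exp.mpr
    linarith
  -- laws of the two kinds of sums
  have hDmeas : Measurable (fun ω => ∑ i ∈ Finset.Ioc τ t, X i ω) :=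
    Finset.measurable_sum _ (fun i _ => hmeas i)
  have hGmeas : ∀ k, Measurable (fun ω => ∑ i ∈ Finset.Ioc k τ, X i ω) :=
    fun k => Finset.measurable_sum _ (fun i _ => hmeas i)
  have hDlaw : P.map (fun ω => ∑ i ∈ Finset.Ioc τ t, X i ω)
      = gaussianReal ((t - τ : ℕ) * μs m) ((t - τ : ℕ) * (σ^2).toNNReal) :=
    map_sum_Ioc (Ts m) X hmeas hindep τ t hτt htT (μs m) ((σ^2).toNNReal) hσ2ne
      (fun i hi1 hi2 => hlaw2 i hi1 (le_trans hi2 htT))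
  have hGlaw : ∀ k, k < τ → P.map (fun ω => ∑ i ∈ Finset.Ioc k τ, X i ω)
      = gaussianReal 0 ((τ - k : ℕ) : ℝ≥0) := by
    intro k hk
    have := map_sum_Ioc (Ts m) X hmeas hindep k τ hk (le_trans hτt.le htT) 0 1 one_ne_zero
      (fun i hi1 hi2 => hlaw1 i (by omega) hi2)
    simpa using this
  -- bad events
  set A : Set Ω := {ω | ∑ i ∈ Finset.Ioc τ t, X i ω < ((t - τ : ℕ) : ℝ) * μs m / 2} with hA_def
  set B : ℕ → Set Ω := fun k =>
    {ω | μs m * Real.sqrt ((τ - k : ℕ)) / 6 ≤ |∑ i ∈ Finset.Ioc k τ, X i ω|} with hB_def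
  have hat1 : (1:ℝ) ≤ ((t - τ : ℕ) : ℝ) := by
    have : 1 ≤ t - τ := by omega
    exact_mod_cast this
  have hane : ((t - τ : ℕ) : ℝ≥0) ≠ 0 := Nat.cast_ne_zero.mpr (by omega)
  have hPA : P A ≤ ENNReal.ofReal (rexp (-((μs m)^2/(8*σ^2)))) := by
    have hmA : MeasurableSet {x : ℝ | x < ((t - τ : ℕ) : ℝ) * μs m / 2} :=
      measurableSet_lt measurable_id measurable_const
    have hPA1 : P A = (P.map (fun ω => ∑ i ∈ Finset.Ioc τ t, X i ω))
        {x | x < ((t - τ : ℕ) : ℝ) * μs m / 2} := by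
      rw [Measure.map_apply hDmeas hmA]
      rfl
    rw [hPA1, hDlaw]
    have hsub : {x : ℝ | x < ((t - τ : ℕ) : ℝ) * μs m / 2}
        ⊆ {x | x ≤ ((t - τ : ℕ) : ℝ) * μs m - ((t - τ : ℕ) : ℝ) * μs m / 2} := by
      intro x hx
      simp only [Set.mem_setOf_eq] at *
      linarith
    refine (measure_mono hsub).trans ?_
    refine (tail_lower _ _ (mul_ne_zero hane hσ2ne) _ (by positivity)).trans ?_
    apply ENNReal.ofReal_le_ofReal
    apply exp_le_exp.mpr
    have hcoe : ((((t - τ : ℕ) : ℝ≥0) * (σ^2).toNNReal : ℝ≥0) : ℝ) = ((t - τ : ℕ) : ℝ) * σ^2 := by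
      rw [NNReal.coe_mul, hσ2, NNReal.coe_natCast]
    rw [hcoe, neg_div, neg_le_neg_iff]
    have hkey : (((t - τ : ℕ) : ℝ) * μs m / 2)^2 / (2 * (((t - τ : ℕ) : ℝ) * σ^2))
        = ((t - τ : ℕ) : ℝ) * ((μs m)^2/(8*σ^2)) := by
      field_simp
      ring
    rw [hkey]
    have hX0 : 0 ≤ (μs m)^2/(8*σ^2) := by positivity
    nlinarith
  have hPB : ∀ k, k < τ → P (B k) ≤ ENNReal.ofReal (2 * rexp (-((μs m)^2/72))) := by
    intro k hk
    have hbt1 : (1:ℝ) ≤ ((τ - k : ℕ) : ℝ) := by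
      have : 1 ≤ τ - k := by omega
      exact_mod_cast this
    have hbne : ((τ - k : ℕ) : ℝ≥0) ≠ 0 := Nat.cast_ne_zero.mpr (by omega)
    have hmB : MeasurableSet {x : ℝ | μs m * Real.sqrt ((τ - k : ℕ)) / 6 ≤ |x|} :=
      measurableSet_le measurable_const measurable_id.abs
    have hPB1 : P (B k) = (P.map (fun ω => ∑ i ∈ Finset.Ioc k τ, X i ω))
        {x | μs m * Real.sqrt ((τ - k : ℕ)) / 6 ≤ |x|} := by
      rw [Measure.map_apply (hGmeas k) hmB]
      rfl
    rw [hPB1, hGlaw k hk]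
    refine (tail_abs _ hbne _ (by positivity)).trans ?_
    rw [show (2 : ℝ≥0∞) = ENNReal.ofReal (2:ℝ) by simp,
      ← ENNReal.ofReal_mul (by norm_num)]
    apply ENNReal.ofReal_le_ofReal
    have hexp : (μs m * Real.sqrt ((τ - k : ℕ)) / 6)^2 / (2 * ((τ - k : ℕ) : ℝ))
        = (μs m)^2/72 := by
      have hbpos : (0:ℝ) < ((τ - k : ℕ) : ℝ) := by linarith
      rw [div_pow, mul_pow, Real.sq_sqrt hbpos.le]
      field_simp
      ring
    rw [NNReal.coe_natCast, neg_div, hexp]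
  -- inclusion of the event in the union of bad events
  have hincl : {ω | (⨆ k : (Finset.Ico τ t : Finset ℕ), glrW (fun i => X i ω) t (k : ℕ))
        ≤ ⨆ k : Fin τ, glrW (fun i => X i ω) t (k : ℕ)}
      ⊆ A ∪ ⋃ k ∈ Finset.range τ, B k := by
    intro ω hω
    by_contra hc
    simp only [Set.mem_union, Set.mem_iUnion, Finset.mem_range, not_or, not_exists] at hc
    obtain ⟨hA', hB'⟩ := hc
    have hD' : ((t - τ : ℕ) : ℝ) * μs m / 2 ≤ ∑ i ∈ Finset.Ioc τ t, X i ω := by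
      have := hA'
      rw [hA_def] at this
      simpa using not_lt.mp this
    have hG' : ∀ k, k < τ →
        |∑ i ∈ Finset.Ioc k τ, X i ω| < μs m * Real.sqrt ((τ - k : ℕ)) / 6 := by
      intro k hk
      have := hB' k hk
      rw [hB_def] at this
      simpa using not_le.mp this
    have hcontra := event_incl (fun i => X i ω) τ t hτ hτt (μs m) hμ1 hD' hG'
    simp only [Set.mem_setOf_eq] at hω
    exact absurd hω (not_le.mpr hcontra)
  -- putting everything together
  have hmain : P {ω | (⨆ k : (Finset.Ico τ t : Finset ℕ), glrW (fun i => X i ω) t (k : ℕ))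
        ≤ ⨆ k : Fin τ, glrW (fun i => X i ω) t (k : ℕ)} ≤ ENNReal.ofReal ε := by
    refine (measure_mono hincl).trans ?_
    refine (measure_union_le _ _).trans ?_
    have hBs : P (⋃ k ∈ Finset.range τ, B k) ≤ ∑ k ∈ Finset.range τ, P (B k) :=
      measure_biUnion_finset_le _ _
    have hBsum : ∑ k ∈ Finset.range τ, P (B k)
        ≤ (τ : ℝ≥0∞) * ENNReal.ofReal (2 * rexp (-((μs m)^2/72))) := by
      refine le_trans (Finset.sum_le_sum fun k hk => hPB k (Finset.mem_range.mp hk)) ?_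
      rw [Finset.sum_const, Finset.card_range, nsmul_eq_mul]
    have hτT : (τ : ℝ≥0∞) ≤ (Ts m : ℝ≥0∞) := by
      exact_mod_cast Nat.cast_le.mpr (by omega : τ ≤ Ts m)
    have hB2 : (τ : ℝ≥0∞) * ENNReal.ofReal (2 * rexp (-((μs m)^2/72)))
        ≤ ENNReal.ofReal (ε/2) := by
      refine le_trans (mul_le_mul_left hτT _) ?_
      rw [show ((Ts m : ℕ) : ℝ≥0∞) = ENNReal.ofReal ((Ts m : ℕ) : ℝ) by
          rw [ENNReal.ofReal_natCast],
        ← ENNReal.ofReal_mul (by positivity)]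
      apply ENNReal.ofReal_le_ofReal
      calc (Ts m : ℝ) * (2 * rexp (-((μs m)^2/72)))
          = 2 * ((Ts m : ℝ) * rexp (-((μs m)^2/72))) := by ring
      _ ≤ 2 * rexp (-((μs m)^2/144)) := by linarith [hTexp]
      _ ≤ ε/2 := h2.le
    have hA2 : P A ≤ ENNReal.ofReal (ε/2) := hPA.trans (ENNReal.ofReal_le_ofReal h1.le)
    calc P A + P (⋃ k ∈ Finset.range τ, B k)
        ≤ ENNReal.ofReal (ε/2) + ENNReal.ofReal (ε/2) :=
          add_le_add hA2 (hBs.trans (hBsum.trans hB2))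
    _ = ENNReal.ofReal ε := by
        rw [← ENNReal.ofReal_add (by positivity) (by positivity)]
        norm_num
  exact ENNReal.toReal_le_of_le_ofReal hε.le hmain

end
end

section
/- Fix σ > 0. For every ε > 0 there exists μ₀ > 0 such that for all μ ≥ μ₀ and all integers τ ≤ v < t: if X_{τ+1}, X_{τ+2}, …, X_t are i.i.d. N(μ, σ²), then P(W_{t,τ} ≤ W_{t,v}) ≤ (1+ε)·exp(−μ²(v−τ)/(10σ²)). -/
open MeasureTheory ProbabilityTheory Filter Real

noncomputable section

lemma exp_mul_gaussianPDFReal (m u : ℝ) {v : NNReal} (hv : v ≠ 0) (x : ℝ) :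
    Real.exp (u * x) * gaussianPDFReal m v x
      = Real.exp (u * m + v * u ^ 2 / 2) * gaussianPDFReal (m + u * v) v x := by
  have hv' : (0:ℝ) < (v:ℝ) := by exact_mod_cast zero_lt_iff.mpr hv
  simp only [gaussianPDFReal]
  rw [mul_left_comm, mul_left_comm (Real.exp _), ← Real.exp_add, ← Real.exp_add]
  congr 1
  rw [Real.exp_eq_exp]
  field_simp
  ring

lemma integrable_exp_mul_gaussianReal (m u : ℝ) {v : NNReal} (hv : v ≠ 0) :
    Integrable (fun x => Real.exp (u * x)) (gaussianReal m v) := by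
  rw [gaussianReal_of_var_ne_zero _ hv]
  rw [integrable_withDensity_iff (measurable_gaussianPDF m v)
    (ae_of_all _ fun x => ENNReal.ofReal_lt_top)]
  have h : (fun x => Real.exp (u * x) * (gaussianPDF m v x).toReal)
      = fun x => Real.exp (u * m + v * u ^ 2 / 2) * gaussianPDFReal (m + u * v) v x := by
    ext x
    rw [gaussianPDF, ENNReal.toReal_ofReal (gaussianPDFReal_nonneg _ _ _),
      exp_mul_gaussianPDFReal m u hv x]
  rw [h]
  exact (integrable_gaussianPDFReal _ _).const_mul _

lemma integral_exp_mul_gaussianReal (m u : ℝ) {v : NNReal} (hv : v ≠ 0) :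
    ∫ x, Real.exp (u * x) ∂(gaussianReal m v) = Real.exp (u * m + v * u ^ 2 / 2) := by
  rw [gaussianReal_of_var_ne_zero _ hv]
  have h : (gaussianPDF m v) = fun x => (((gaussianPDFReal m v x).toNNReal : NNReal) : ENNReal) :=
    rfl
  rw [h, integral_withDensity_eq_integral_smul
    ((measurable_gaussianPDFReal m v).real_toNNReal) _]
  have h2 : ∀ x, ((gaussianPDFReal m v x).toNNReal : NNReal) • Real.exp (u * x)
      = Real.exp (u * m + v * u ^ 2 / 2) * gaussianPDFReal (m + u * v) v x := by
    intro x
    rw [NNReal.smul_def, Real.coe_toNNReal _ (gaussianPDFReal_nonneg _ _ _), smul_eq_mul,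
      mul_comm (gaussianPDFReal m v x), exp_mul_gaussianPDFReal m u hv x]
  simp_rw [h2]
  rw [integral_const_mul, integral_gaussianPDFReal_eq_one _ hv, mul_one]

lemma chernoff_weighted {Ω : Type} [MeasurableSpace Ω] (P : Measure Ω) [IsProbabilityMeasure P]
    (X : ℕ → Ω → ℝ) (hXmeas : ∀ i, Measurable (X i))
    (τ t : ℕ)
    (hIndep : iIndepFun (fun i : ↥(Set.Ioc τ t) => X (i : ℕ)) P)
    (μ : ℝ) {V : NNReal} (hV : V ≠ 0)
    (hmap : ∀ i, τ < i → i ≤ t → Measure.map (X i) P = gaussianReal μ V)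
    (c : ℕ → ℝ) (s : ℝ) (hs : s ≤ 0) :
    (P {ω | ∑ i ∈ Finset.Ioc τ t, c i * X i ω ≤ 0}).toReal
      ≤ Real.exp (∑ i ∈ Finset.Ioc τ t, (s * c i * μ + V * (s * c i) ^ 2 / 2)) := by
  classical
  set Z : ↥(Set.Ioc τ t) → Ω → ℝ := fun i ω => c i * X i ω with hZ
  have hZmeas : ∀ i, Measurable (Z i) := fun i => (hXmeas i).const_mul _
  have hZindep : iIndepFun Z P :=
    hIndep.comp (fun i x => c i * x) (fun i => measurable_id.const_mul _)
  have hfun : ∀ i : ↥(Set.Ioc τ t), ∀ u : ℝ,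
      (fun ω => Real.exp (u * Z i ω)) = (fun x => Real.exp ((u * c i) * x)) ∘ (X i) := by
    intro i u
    ext ω
    simp only [hZ, Function.comp_apply]
    ring_nf
  have hint : ∀ i : ↥(Set.Ioc τ t), Integrable (fun ω => Real.exp (s * Z i ω)) P := by
    intro i
    have hgm : Measurable (fun x : ℝ => Real.exp ((s * c (i : ℕ)) * x)) := by fun_prop
    have hg : Integrable (fun x : ℝ => Real.exp ((s * c (i : ℕ)) * x))
        (Measure.map (X (i : ℕ)) P) := by
      rw [hmap (i : ℕ) i.2.1 i.2.2]
      exact integrable_exp_mul_gaussianReal μ (s * c (i : ℕ)) hV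
    have h2 := (integrable_map_measure hgm.aestronglyMeasurable
      (hXmeas (i : ℕ)).aemeasurable).mp hg
    have heq : (fun ω => Real.exp (s * Z i ω))
        = (fun x : ℝ => Real.exp ((s * c (i : ℕ)) * x)) ∘ (X (i : ℕ)) := hfun i s
    rw [heq]
    exact h2
  have hmgf : ∀ i : ↥(Set.Ioc τ t),
      mgf (Z i) P s = Real.exp (s * c (i : ℕ) * μ + V * (s * c (i : ℕ)) ^ 2 / 2) := by
    intro i
    have hgm : Measurable (fun x : ℝ => Real.exp ((s * c (i : ℕ)) * x)) := by fun_prop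
    have h1 : mgf (Z i) P s = ∫ ω, Real.exp ((s * c (i : ℕ)) * X (i : ℕ) ω) ∂P := by
      rw [mgf]
      congr 1 with ω
      rw [Real.exp_eq_exp]
      simp only [hZ]
      ring
    rw [h1, ← integral_map (hXmeas (i : ℕ)).aemeasurable hgm.aestronglyMeasurable,
      hmap (i : ℕ) i.2.1 i.2.2, integral_exp_mul_gaussianReal μ (s * c (i : ℕ)) hV]
  have hsetcoe : ∀ (f : ℕ → ℝ),
      ∑ i : ↥(Set.Ioc τ t), f (i : ℕ) = ∑ i ∈ Finset.Ioc τ t, f i := by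
    intro f
    rw [Finset.sum_set_coe (f := f)]
    congr 1
    exact Set.toFinset_Ioc τ t
  have hYeq : {ω | ∑ i ∈ Finset.Ioc τ t, c i * X i ω ≤ 0}
      = {ω | (∑ i : ↥(Set.Ioc τ t), Z i) ω ≤ 0} := by
    ext ω
    simp only [Set.mem_setOf_eq, Finset.sum_apply]
    rw [hsetcoe (fun i => c i * X i ω)]
  have hcher := measure_le_le_exp_mul_mgf (μ := P) (X := ∑ i : ↥(Set.Ioc τ t), Z i) 0 hs
    (hZindep.integrable_exp_mul_sum hZmeas (fun i _ => hint i))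
  rw [hYeq]
  refine hcher.trans ?_
  rw [mul_zero, Real.exp_zero, one_mul]
  rw [hZindep.mgf_sum hZmeas Finset.univ]
  refine le_of_eq ?_
  calc ∏ i : ↥(Set.Ioc τ t), mgf (Z i) P s
      = ∏ i : ↥(Set.Ioc τ t),
          Real.exp (s * c (i : ℕ) * μ + V * (s * c (i : ℕ)) ^ 2 / 2) := by
        exact Finset.prod_congr rfl (fun i _ => hmgf i)
    _ = Real.exp (∑ i : ↥(Set.Ioc τ t), (s * c (i : ℕ) * μ + V * (s * c (i : ℕ)) ^ 2 / 2)) := by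
        rw [Real.exp_sum]
    _ = Real.exp (∑ i ∈ Finset.Ioc τ t, (s * c i * μ + V * (s * c i) ^ 2 / 2)) := by
        rw [hsetcoe (fun i => s * c i * μ + V * (s * c i) ^ 2 / 2)]

set_option maxHeartbeats 1000000 in
/-- For σ > 0 and every ε > 0 there is μ₀ > 0 such that for all μ ≥ μ₀ and
all integers τ ≤ v < t: if X_{τ+1},…,X_t are i.i.d. N(μ,σ²), then
P(W_{t,τ} ≤ W_{t,v}) ≤ (1+ε)·exp(−μ²(v−τ)/(10σ²)). -/
theorem statement10 (σ : ℝ) (hσ : 0 < σ) :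
    ∀ ε : ℝ, 0 < ε → ∃ μ₀ : ℝ, 0 < μ₀ ∧ ∀ μ : ℝ, μ₀ ≤ μ →
      ∀ τ v t : ℕ, τ ≤ v → v < t →
      ∀ (Ω : Type) [MeasurableSpace Ω] (P : Measure Ω) [IsProbabilityMeasure P]
        (X : ℕ → Ω → ℝ), (∀ i, Measurable (X i)) →
      iIndepFun (fun i : ↥(Set.Ioc τ t) => X (i : ℕ)) P →
      (∀ i, τ < i → i ≤ t → Measure.map (X i) P = gaussianReal μ ((σ ^ 2).toNNReal)) →
      (P {ω | glrW (fun i => X i ω) t τ ≤ glrW (fun i => X i ω) t v}).toReal ≤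
        (1 + ε) * Real.exp (-(μ ^ 2 * ((v : ℝ) - (τ : ℝ))) / (10 * σ ^ 2)) := by
  intro ε hε
  refine ⟨7 * σ, by positivity, ?_⟩
  intro μ hμ τ v t hτv hvt Ω _ P _ X hXmeas hIndep hmap
  have hσ2 : (0:ℝ) < σ ^ 2 := by positivity
  have hμpos : (0:ℝ) < μ := lt_of_lt_of_le (by positivity) hμ
  have hprob : ∀ s : Set Ω, (P s).toReal ≤ 1 := by
    intro s
    have h1 : P s ≤ 1 := prob_le_one
    calc (P s).toReal ≤ (1 : ENNReal).toReal := ENNReal.toReal_mono (by simp) h1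
      _ = 1 := by simp
  by_cases hτveq : τ = v
  · subst hτveq
    have hE : -(μ ^ 2 * ((τ : ℝ) - (τ : ℝ))) / (10 * σ ^ 2) = 0 := by
      rw [sub_self]; ring
    rw [hE, Real.exp_zero, mul_one]
    exact (hprob _).trans (by linarith)
  -- main case : τ < v
  have hτv2 : τ < v := lt_of_le_of_ne hτv hτveq
  have hτt : τ < t := lt_of_lt_of_le hτv2 hvt.le
  set n : ℝ := (t : ℝ) - (τ : ℝ) with hn_def
  set m : ℝ := (t : ℝ) - (v : ℝ) with hm_def
  set d : ℝ := (v : ℝ) - (τ : ℝ) with hd_def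
  have hm : (0:ℝ) < m := by
    rw [hm_def]; rw [sub_pos]; exact_mod_cast hvt
  have hd : (1:ℝ) ≤ d := by
    rw [hd_def]
    have : (τ : ℝ) + 1 ≤ (v : ℝ) := by exact_mod_cast hτv2
    linarith
  have hnd : n = d + m := by rw [hn_def, hm_def, hd_def]; ring
  have hn : (0:ℝ) < n := by linarith
  set r : ℝ := Real.sqrt n / Real.sqrt m with hr
  have hsqn : (0:ℝ) < Real.sqrt n := Real.sqrt_pos.mpr hn
  have hsqm : (0:ℝ) < Real.sqrt m := Real.sqrt_pos.mpr hm
  have hsm : Real.sqrt m * Real.sqrt m = m := Real.mul_self_sqrt hm.le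
  have hsn : Real.sqrt n * Real.sqrt n = n := Real.mul_self_sqrt hn.le
  have hmr : m * r = Real.sqrt m * Real.sqrt n := by
    rw [hr]
    field_simp
    nlinarith [hsm]
  have hmr2 : m * r ^ 2 = n := by
    rw [hr]
    field_simp
    rw [Real.sq_sqrt hn.le, Real.sq_sqrt hm.le]
  -- the weight functions
  set c : ℝ → ℕ → ℝ := fun e i => if i ≤ v then 1 else 1 + e with hc
  -- sums
  have hpS : ∀ (Y : ℕ → ℝ) (k : ℕ), k ≤ t → pS Y t - pS Y k = ∑ i ∈ Finset.Ioc k t, Y i := by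
    intro Y k hk
    have h0 := Finset.sum_Ioc_consecutive Y (Nat.zero_le k) hk
    have h1 : ∀ j : ℕ, pS Y j = ∑ i ∈ Finset.Ioc 0 j, Y i := by
      intro j; rw [pS, ← Finset.Icc_add_one_left_eq_Ioc]; rfl
    rw [h1, h1, ← h0]; ring
  -- event inclusion
  have hsub : {ω | glrW (fun i => X i ω) t τ ≤ glrW (fun i => X i ω) t v}
      ⊆ {ω | ∑ i ∈ Finset.Ioc τ t, c (-r) i * X i ω ≤ 0}
        ∪ {ω | ∑ i ∈ Finset.Ioc τ t, c r i * X i ω ≤ 0} := by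
    intro ω hω
    simp only [Set.mem_setOf_eq, glrW] at hω
    rw [hpS _ τ hτt.le, hpS _ v hvt.le] at hω
    set A : ℝ := ∑ i ∈ Finset.Ioc τ t, X i ω with hA
    set B : ℝ := ∑ i ∈ Finset.Ioc v t, X i ω with hB
    have hsplit : ∀ e : ℝ, ∑ i ∈ Finset.Ioc τ t, c e i * X i ω = A + e * B := by
      intro e
      rw [hA, ← Finset.sum_Ioc_consecutive (fun i => c e i * X i ω) hτv hvt.le,
        ← Finset.sum_Ioc_consecutive (fun i => X i ω) hτv hvt.le]
      have e1 : ∑ i ∈ Finset.Ioc τ v, c e i * X i ω = ∑ i ∈ Finset.Ioc τ v, X i ω := by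
        refine Finset.sum_congr rfl (fun i hi => ?_)
        rw [hc]; simp only [if_pos (Finset.mem_Ioc.mp hi).2, one_mul]
      have e2 : ∑ i ∈ Finset.Ioc v t, c e i * X i ω = (1 + e) * B := by
        rw [hB, Finset.mul_sum]
        refine Finset.sum_congr rfl (fun i hi => ?_)
        rw [hc]; simp only [if_neg (not_le.mpr (Finset.mem_Ioc.mp hi).1)]
      rw [e1, e2, hB]
      ring
    have habs : |A| * Real.sqrt m ≤ |B| * Real.sqrt n := by
      rw [div_le_div_iff₀ hsqn hsqm] at hω
      exact hω
    have h2 : A ≤ r * |B| := by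
      have : |A| ≤ r * |B| := by
        rw [hr, div_mul_eq_mul_div, le_div_iff₀ hsqm]
        nlinarith [habs]
      exact (le_abs_self A).trans this
    rcases abs_cases B with ⟨hBeq, _⟩ | ⟨hBeq, _⟩
    · left
      simp only [Set.mem_setOf_eq]
      rw [hsplit (-r)]
      rw [hBeq] at h2
      linarith
    · right
      simp only [Set.mem_setOf_eq]
      rw [hsplit r]
      rw [hBeq] at h2
      linarith
  -- variance
  set V : NNReal := (σ ^ 2).toNNReal with hV
  have hVne : V ≠ 0 := by
    rw [hV]
    simp only [ne_eq, Real.toNNReal_eq_zero, not_le]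
    exact hσ2
  have hVcoe : (V : ℝ) = σ ^ 2 := Real.coe_toNNReal _ hσ2.le
  set s : ℝ := -μ / (2 * σ ^ 2) with hs_def
  have hs : s ≤ 0 := by
    rw [hs_def]
    exact div_nonpos_of_nonpos_of_nonneg (by linarith) (by positivity)
  -- closed form for the exponent sum
  have hsum : ∀ e : ℝ, ∑ i ∈ Finset.Ioc τ t, (s * c e i * μ + V * (s * c e i) ^ 2 / 2)
      = d * (s * μ + V * s ^ 2 / 2)
        + m * (s * (1 + e) * μ + V * (s * (1 + e)) ^ 2 / 2) := by
    intro e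
    rw [← Finset.sum_Ioc_consecutive (fun i => s * c e i * μ + V * (s * c e i) ^ 2 / 2) hτv
      hvt.le]
    have e1 : ∑ i ∈ Finset.Ioc τ v, (s * c e i * μ + V * (s * c e i) ^ 2 / 2)
        = d * (s * μ + V * s ^ 2 / 2) := by
      have : ∀ i ∈ Finset.Ioc τ v, s * c e i * μ + V * (s * c e i) ^ 2 / 2
          = s * μ + V * s ^ 2 / 2 := by
        intro i hi
        rw [hc]; simp only [if_pos (Finset.mem_Ioc.mp hi).2, mul_one]
      rw [Finset.sum_congr rfl this, Finset.sum_const, Nat.card_Ioc, nsmul_eq_mul]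
      congr 1
      rw [hd_def]
      rw [Nat.cast_sub hτv]
    have e2 : ∑ i ∈ Finset.Ioc v t, (s * c e i * μ + V * (s * c e i) ^ 2 / 2)
        = m * (s * (1 + e) * μ + V * (s * (1 + e)) ^ 2 / 2) := by
      have : ∀ i ∈ Finset.Ioc v t, s * c e i * μ + V * (s * c e i) ^ 2 / 2
          = s * (1 + e) * μ + V * (s * (1 + e)) ^ 2 / 2 := by
        intro i hi
        rw [hc]; simp only [if_neg (not_le.mpr (Finset.mem_Ioc.mp hi).1)]
      rw [Finset.sum_congr rfl this, Finset.sum_const, Nat.card_Ioc, nsmul_eq_mul]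
      congr 1
      rw [hm_def]
      rw [Nat.cast_sub hvt.le]
    rw [e1, e2]
  -- bound on the exponent for both branches
  have hGform : ∀ e : ℝ, d * (s * μ + V * s ^ 2 / 2)
        + m * (s * (1 + e) * μ + V * (s * (1 + e)) ^ 2 / 2)
      = μ ^ 2 / (8 * σ ^ 2) * ((d + m * (1 + e) ^ 2) - 4 * (d + m * (1 + e))) := by
    intro e
    rw [hVcoe, hs_def]
    field_simp
    ring
  have hkey1 : (d + m * (1 + (-r)) ^ 2) - 4 * (d + m * (1 + (-r))) ≤ -d := by
    nlinarith [sq_nonneg (Real.sqrt n - Real.sqrt m), hsm, hsn, hmr, hmr2, hnd, hd, hm]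
  have hkey2 : (d + m * (1 + r) ^ 2) - 4 * (d + m * (1 + r)) ≤ -d := by
    nlinarith [hmr, hmr2, hnd, hd, hm, hsqn.le, hsqm.le, hsm, hsn,
      mul_nonneg hsqm.le hsqn.le]
  have hGbound : ∀ e : ℝ, ((d + m * (1 + e) ^ 2) - 4 * (d + m * (1 + e)) ≤ -d) →
      ∑ i ∈ Finset.Ioc τ t, (s * c e i * μ + V * (s * c e i) ^ 2 / 2)
        ≤ -(μ ^ 2 * d) / (8 * σ ^ 2) := by
    intro e he
    rw [hsum e, hGform e]
    have h8 : (0:ℝ) < μ ^ 2 / (8 * σ ^ 2) := by positivity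
    calc μ ^ 2 / (8 * σ ^ 2) * ((d + m * (1 + e) ^ 2) - 4 * (d + m * (1 + e)))
        ≤ μ ^ 2 / (8 * σ ^ 2) * (-d) := by
          exact mul_le_mul_of_nonneg_left he h8.le
      _ = -(μ ^ 2 * d) / (8 * σ ^ 2) := by ring
  -- Chernoff bounds
  have hch1 := chernoff_weighted P X hXmeas τ t hIndep μ hVne hmap (c (-r)) s hs
  have hch2 := chernoff_weighted P X hXmeas τ t hIndep μ hVne hmap (c r) s hs
  have hb1 : (P {ω | ∑ i ∈ Finset.Ioc τ t, c (-r) i * X i ω ≤ 0}).toReal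
      ≤ Real.exp (-(μ ^ 2 * d) / (8 * σ ^ 2)) :=
    hch1.trans (Real.exp_le_exp.mpr (hGbound (-r) hkey1))
  have hb2 : (P {ω | ∑ i ∈ Finset.Ioc τ t, c r i * X i ω ≤ 0}).toReal
      ≤ Real.exp (-(μ ^ 2 * d) / (8 * σ ^ 2)) :=
    hch2.trans (Real.exp_le_exp.mpr (hGbound r hkey2))
  -- measure arithmetic
  have hmeas_le : (P {ω | glrW (fun i => X i ω) t τ ≤ glrW (fun i => X i ω) t v}).toReal
      ≤ (P {ω | ∑ i ∈ Finset.Ioc τ t, c (-r) i * X i ω ≤ 0}).toReal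
        + (P {ω | ∑ i ∈ Finset.Ioc τ t, c r i * X i ω ≤ 0}).toReal := by
    have h1 : P {ω | glrW (fun i => X i ω) t τ ≤ glrW (fun i => X i ω) t v}
        ≤ P {ω | ∑ i ∈ Finset.Ioc τ t, c (-r) i * X i ω ≤ 0}
          + P {ω | ∑ i ∈ Finset.Ioc τ t, c r i * X i ω ≤ 0} :=
      (measure_mono hsub).trans (measure_union_le _ _)
    have h2 : (P {ω | ∑ i ∈ Finset.Ioc τ t, c (-r) i * X i ω ≤ 0}
          + P {ω | ∑ i ∈ Finset.Ioc τ t, c r i * X i ω ≤ 0}) ≠ ⊤ :=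
      ENNReal.add_ne_top.mpr ⟨measure_ne_top _ _, measure_ne_top _ _⟩
    calc (P {ω | glrW (fun i => X i ω) t τ ≤ glrW (fun i => X i ω) t v}).toReal
        ≤ (P {ω | ∑ i ∈ Finset.Ioc τ t, c (-r) i * X i ω ≤ 0}
          + P {ω | ∑ i ∈ Finset.Ioc τ t, c r i * X i ω ≤ 0}).toReal :=
          ENNReal.toReal_mono h2 h1
      _ = _ := ENNReal.toReal_add (measure_ne_top _ _) (measure_ne_top _ _)
  -- final numeric step
  have hfin : 2 * Real.exp (-(μ ^ 2 * d) / (8 * σ ^ 2))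
      ≤ (1 + ε) * Real.exp (-(μ ^ 2 * d) / (10 * σ ^ 2)) := by
    have hsplit8 : Real.exp (-(μ ^ 2 * d) / (8 * σ ^ 2))
        = Real.exp (-(μ ^ 2 * d) / (40 * σ ^ 2)) * Real.exp (-(μ ^ 2 * d) / (10 * σ ^ 2)) := by
      rw [← Real.exp_add]
      congr 1
      field_simp
      ring
    have hμ2 : 49 * σ ^ 2 ≤ μ ^ 2 := by nlinarith
    have hlog2 : Real.log 2 ≤ 1 := by
      have := Real.log_le_sub_one_of_pos (by norm_num : (0:ℝ) < 2)
      linarith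
    have hexp40 : Real.exp (-(μ ^ 2 * d) / (40 * σ ^ 2)) ≤ 1 / 2 := by
      have harg : -(μ ^ 2 * d) / (40 * σ ^ 2) ≤ -Real.log 2 := by
        rw [div_le_iff₀ (by positivity : (0:ℝ) < 40 * σ ^ 2)]
        nlinarith
      calc Real.exp (-(μ ^ 2 * d) / (40 * σ ^ 2)) ≤ Real.exp (-Real.log 2) :=
            Real.exp_le_exp.mpr harg
        _ = 1 / 2 := by
            rw [Real.exp_neg, Real.exp_log (by norm_num : (0:ℝ) < 2)]
            norm_num
    rw [hsplit8]
    have hepos : (0:ℝ) < Real.exp (-(μ ^ 2 * d) / (10 * σ ^ 2)) := Real.exp_pos _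
    nlinarith [Real.exp_pos (-(μ ^ 2 * d) / (40 * σ ^ 2))]
  calc (P {ω | glrW (fun i => X i ω) t τ ≤ glrW (fun i => X i ω) t v}).toReal
      ≤ (P {ω | ∑ i ∈ Finset.Ioc τ t, c (-r) i * X i ω ≤ 0}).toReal
        + (P {ω | ∑ i ∈ Finset.Ioc τ t, c r i * X i ω ≤ 0}).toReal := hmeas_le
    _ ≤ 2 * Real.exp (-(μ ^ 2 * d) / (8 * σ ^ 2)) := by linarith
    _ ≤ (1 + ε) * Real.exp (-(μ ^ 2 * d) / (10 * σ ^ 2)) := hfin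
    _ = (1 + ε) * Real.exp (-(μ ^ 2 * ((v : ℝ) - (τ : ℝ))) / (10 * σ ^ 2)) := by rw [hd_def]

end
end

section
/- Fix σ > 0. For every sequence of parameter pairs (μ_m, 𝒯_m) with μ_m → ∞, 𝒯_m → ∞ and √(log 𝒯_m)/μ_m → 0: in the change-point model with change after time τ (X_1,…,X_τ i.i.d. N(0,1), X_{τ+1},…,X_{𝒯_m} i.i.d. N(μ_m, σ²), all independent), the supremum over integers 1 ≤ τ < t ≤ 𝒯_m of P(Y_t^GLR ≠ W_{t,τ}) tends to 0 as m → ∞; i.e., with probability tending to 1 uniformly in τ and t, the GLR maximum is attained at the change point k = τ. -/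
open MeasureTheory ProbabilityTheory Filter Real

noncomputable section

/-- GLR statistic `Y_t^GLR = max_{0 ≤ k < t} W_{t,k}`. -/
def Yglr (X : ℕ → ℝ) (t : ℕ) : ℝ := ⨆ k : Fin t, glrW X t (k : ℕ)

open scoped NNReal ENNReal

set_option maxHeartbeats 1000000

lemma sqrt_subadd {a b : ℝ} (ha : 0 ≤ a) (hb : 0 ≤ b) :
    Real.sqrt (a + b) ≤ Real.sqrt a + Real.sqrt b := by
  rw [show Real.sqrt a + Real.sqrt b = Real.sqrt ((Real.sqrt a + Real.sqrt b) ^ 2) by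
    rw [Real.sqrt_sq (by positivity)]]
  apply Real.sqrt_le_sqrt
  nlinarith [Real.sq_sqrt ha, Real.sq_sqrt hb,
    mul_nonneg (Real.sqrt_nonneg a) (Real.sqrt_nonneg b)]

lemma pS_sub (x : ℕ → ℝ) {a b : ℕ} (hab : a ≤ b) :
    pS x b - pS x a = ∑ i ∈ Finset.Ioc a b, x i := by
  have h0 : ∀ n, pS x n = ∑ i ∈ Finset.Ioc 0 n, x i := by
    intro n; rw [pS, ← Finset.Icc_add_one_left_eq_Ioc, zero_add]
  rw [h0, h0, sub_eq_iff_eq_add, add_comm,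
    Finset.sum_Ioc_consecutive x (Nat.zero_le a) hab]

lemma post_sum_bound {x : ℕ → ℝ} {μ c : ℝ} {τ t a b : ℕ}
    (h1 : ∀ i, τ < i → i ≤ t → |x i - μ| ≤ c)
    (hτa : τ ≤ a) (hab : a ≤ b) (hbt : b ≤ t) :
    |(pS x b - pS x a) - ((b:ℝ) - a) * μ| ≤ ((b:ℝ) - a) * c := by
  rw [pS_sub x hab]
  have hcast : ((b:ℝ) - a) = ((Finset.Ioc a b).card : ℝ) := by
    rw [Nat.card_Ioc, Nat.cast_sub hab]
  rw [hcast]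
  have h2 : (∑ i ∈ Finset.Ioc a b, x i) - ((Finset.Ioc a b).card : ℝ) * μ
      = ∑ i ∈ Finset.Ioc a b, (x i - μ) := by
    rw [Finset.sum_sub_distrib, Finset.sum_const, nsmul_eq_mul]
  rw [h2]
  refine (Finset.abs_sum_le_sum_abs _ _).trans ?_
  have := Finset.sum_le_card_nsmul (Finset.Ioc a b) (fun i => |x i - μ|) c
    (fun i hi => h1 i (lt_of_le_of_lt hτa (Finset.mem_Ioc.mp hi).1)
      ((Finset.mem_Ioc.mp hi).2.trans hbt))
  simpa [nsmul_eq_mul] using this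

/-- pure-real core inequality, pre-change case -/
lemma case_pre {μ σ B V M sg se sge : ℝ} (hσ : 0 < σ) (hB : 0 < B)
    (hμeq : μ = 8 * (σ + 1) * B)
    (hsg1 : 1 ≤ sg) (hse1 : 1 ≤ se) (hsge0 : 0 < sge)
    (hsge_le : sge ≤ sg + se) (hsge_ge : sg ≤ sge)
    (hsgesq : sge ^ 2 = sg ^ 2 + se ^ 2)
    (hVlb : sg ^ 2 * (μ - σ * B) ≤ V) (hVpos : 0 < V)
    (hM : |M| ≤ se * B) :
    |V + M| * sg ≤ V * sge := by
  have hsg : (0:ℝ) < sg := by linarith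
  have hse : (0:ℝ) < se := by linarith
  have hμσB : 0 < μ - σ * B := by nlinarith
  have habs : |V + M| ≤ V + se * B := by
    calc |V + M| ≤ |V| + |M| := abs_add_le _ _
      _ = V + |M| := by rw [abs_of_pos hVpos]
      _ ≤ V + se * B := by linarith
  have l1 : se * B * sg * (sge + sg) ≤ se * B * sg * (2 * sg + se) := by
    have h0 : (0:ℝ) ≤ se * B * sg := by positivity
    nlinarith
  have l2 : se * B * sg * (2 * sg + se) ≤ 3 * B * sg ^ 2 * se ^ 2 := by
    nlinarith [mul_nonneg (mul_nonneg hB.le (mul_pos hsg hsg).le)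
        (mul_nonneg (sub_nonneg.2 hse1) hse.le),
      mul_nonneg (mul_nonneg hB.le hse.le)
        (mul_nonneg (sub_nonneg.2 hsg1) (mul_nonneg hsg.le hse.le))]
  have h3B : 3 * B ≤ μ - σ * B := by nlinarith
  have l3 : 3 * B * sg ^ 2 * se ^ 2 ≤ V * se ^ 2 := by
    nlinarith [mul_le_mul_of_nonneg_right hVlb (sq_nonneg se),
      mul_le_mul_of_nonneg_right h3B
        (mul_nonneg (mul_nonneg hsg.le hsg.le) (mul_nonneg hse.le hse.le))]
  have key : se * B * sg * (sge + sg) ≤ V * (sge ^ 2 - sg ^ 2) := by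
    rw [hsgesq]
    have : sg ^ 2 + se ^ 2 - sg ^ 2 = se ^ 2 := by ring
    rw [this]
    exact (l1.trans l2).trans l3
  have hdiv : se * B * sg ≤ V * (sge - sg) := by
    refine le_of_mul_le_mul_right ?_ (by positivity : (0:ℝ) < sge + sg)
    nlinarith [key]
  calc |V + M| * sg ≤ (V + se * B) * sg := mul_le_mul_of_nonneg_right habs hsg.le
    _ ≤ V * sge := by nlinarith

/-- pure-real core inequality, post-change case -/
lemma case_post {μ σ B u w sd sg : ℝ} (hσ : 0 < σ) (hB : 0 < B)
    (hμeq : μ = 8 * (σ + 1) * B)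
    (hsd : 0 < sd) (hsdg : sd ≤ sg)
    (huub : u ≤ sd ^ 2 * (μ + σ * B)) (hupos : 0 < u)
    (hwlb : (sg ^ 2 - sd ^ 2) * (μ - σ * B) ≤ w) :
    u * sg ≤ (u + w) * sd := by
  have hsg : (0:ℝ) < sg := lt_of_lt_of_le hsd hsdg
  have hμσB : 0 < μ - σ * B := by nlinarith
  have hsqle : sd ^ 2 ≤ sg ^ 2 := by nlinarith
  have hA : u * (sg - sd) * (sg + sd) ≤ sd ^ 2 * (μ + σ * B) * (sg ^ 2 - sd ^ 2) := by
    nlinarith [mul_le_mul_of_nonneg_right huub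
      (mul_nonneg (sub_nonneg.mpr hsdg) (by positivity : (0:ℝ) ≤ sg + sd))]
  have h32 : μ + σ * B ≤ 2 * (μ - σ * B) := by nlinarith
  have m1 : sd ^ 2 * (μ + σ * B) * (sg ^ 2 - sd ^ 2)
      ≤ sd ^ 2 * (2 * (μ - σ * B)) * (sg ^ 2 - sd ^ 2) := by
    nlinarith [mul_nonneg (sq_nonneg sd) (sub_nonneg.mpr hsqle)]
  have m2 : sd ^ 2 * (2 * (μ - σ * B)) * (sg ^ 2 - sd ^ 2)
      ≤ (sg ^ 2 - sd ^ 2) * (μ - σ * B) * sd * (sg + sd) := by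
    nlinarith [mul_nonneg (mul_nonneg (sub_nonneg.mpr hsqle) hμσB.le) hsd.le]
  have m3 : (sg ^ 2 - sd ^ 2) * (μ - σ * B) * sd * (sg + sd) ≤ w * sd * (sg + sd) := by
    nlinarith [mul_le_mul_of_nonneg_right hwlb
      (mul_nonneg hsd.le (by positivity : (0:ℝ) ≤ sg + sd))]
  have hstep : u * (sg - sd) ≤ w * sd := by
    refine le_of_mul_le_mul_right ?_ (by positivity : (0:ℝ) < sg + sd)
    nlinarith [(hA.trans m1).trans (m2.trans m3)]
  nlinarith

lemma det_key {x : ℕ → ℝ} {τ t : ℕ} {μ σ B : ℝ} (hσ : 0 < σ) (hB : 0 < B)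
    (hμeq : μ = 8 * (σ + 1) * B)
    (hτ1 : 1 ≤ τ) (hτt : τ < t)
    (h1 : ∀ i, τ < i → i ≤ t → |x i - μ| ≤ σ * B)
    (h2 : ∀ k, k < τ → |pS x τ - pS x k| ≤ Real.sqrt ((τ:ℝ) - k) * B) :
    ∀ k, k < t → glrW x t k ≤ glrW x t τ := by
  intro k hkt
  have hμσB : 0 < μ - σ * B := by nlinarith
  have hg1 : (1:ℝ) ≤ (t:ℝ) - τ := by
    have : (τ:ℝ) + 1 ≤ t := by exact_mod_cast hτt
    linarith
  have hgpos : (0:ℝ) < (t:ℝ) - τ := by linarith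
  have hV := post_sum_bound h1 (le_refl τ) hτt.le (le_refl t)
  have hVlb : ((t:ℝ) - τ) * (μ - σ * B) ≤ pS x t - pS x τ := by
    have := (abs_le.mp hV).1; nlinarith
  have hVpos : 0 < pS x t - pS x τ := lt_of_lt_of_le (mul_pos hgpos hμσB) hVlb
  have hsg : Real.sqrt ((t:ℝ) - τ) > 0 := Real.sqrt_pos.mpr hgpos
  have hsgsq : Real.sqrt ((t:ℝ) - τ) ^ 2 = (t:ℝ) - τ := Real.sq_sqrt hgpos.le
  have hsg1 : 1 ≤ Real.sqrt ((t:ℝ) - τ) := by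
    rw [show (1:ℝ) = Real.sqrt 1 by simp]; exact Real.sqrt_le_sqrt hg1
  have hWτ : glrW x t τ = (pS x t - pS x τ) / Real.sqrt ((t:ℝ) - τ) := by
    rw [glrW, abs_of_pos hVpos]
  rcases lt_trichotomy k τ with hkτ | rfl | hτk
  · -- pre-change k
    have he1 : (1:ℝ) ≤ (τ:ℝ) - k := by
      have : (k:ℝ) + 1 ≤ τ := by exact_mod_cast hkτ
      linarith
    have hepos : (0:ℝ) < (τ:ℝ) - k := by linarith
    have hM := h2 k hkτ
    have hsplit : pS x t - pS x k = (pS x t - pS x τ) + (pS x τ - pS x k) := by ring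
    have hse : Real.sqrt ((τ:ℝ) - k) > 0 := Real.sqrt_pos.mpr hepos
    have hse1 : 1 ≤ Real.sqrt ((τ:ℝ) - k) := by
      rw [show (1:ℝ) = Real.sqrt 1 by simp]; exact Real.sqrt_le_sqrt he1
    have htk : (t:ℝ) - k = ((t:ℝ) - τ) + ((τ:ℝ) - k) := by ring
    have hgepos : (0:ℝ) < (t:ℝ) - k := by linarith
    have hsge : Real.sqrt ((t:ℝ) - k) > 0 := Real.sqrt_pos.mpr hgepos
    have hsgesq : Real.sqrt ((t:ℝ) - k) ^ 2
        = Real.sqrt ((t:ℝ) - τ) ^ 2 + Real.sqrt ((τ:ℝ) - k) ^ 2 := by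
      rw [Real.sq_sqrt hgepos.le, Real.sq_sqrt hgpos.le, Real.sq_sqrt hepos.le]; ring
    have hsge_le : Real.sqrt ((t:ℝ) - k)
        ≤ Real.sqrt ((t:ℝ) - τ) + Real.sqrt ((τ:ℝ) - k) := by
      rw [htk]; exact sqrt_subadd hgpos.le hepos.le
    have hsge_ge : Real.sqrt ((t:ℝ) - τ) ≤ Real.sqrt ((t:ℝ) - k) := by
      apply Real.sqrt_le_sqrt; linarith
    rw [glrW, hWτ, div_le_div_iff₀ hsge hsg, hsplit]
    exact case_pre hσ hB hμeq hsg1 hse1 hsge hsge_le hsge_ge hsgesq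
      (by rw [hsgsq]; exact hVlb) hVpos hM
  · exact le_refl _
  · -- post-change k
    have hd1 : (1:ℝ) ≤ (t:ℝ) - k := by
      have : (k:ℝ) + 1 ≤ t := by exact_mod_cast hkt
      linarith
    have hdpos : (0:ℝ) < (t:ℝ) - k := by linarith
    have hdg : (t:ℝ) - k ≤ (t:ℝ) - τ := by
      have : (τ:ℝ) < k := by exact_mod_cast hτk
      linarith
    have hU := post_sum_bound h1 hτk.le hkt.le (le_refl t)
    have hW := post_sum_bound h1 (le_refl τ) hτk.le hkt.le
    have hulb : ((t:ℝ) - k) * (μ - σ * B) ≤ pS x t - pS x k := by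
      have := (abs_le.mp hU).1; nlinarith
    have huub : pS x t - pS x k ≤ ((t:ℝ) - k) * (μ + σ * B) := by
      have := (abs_le.mp hU).2; nlinarith
    have hwlb : ((k:ℝ) - τ) * (μ - σ * B) ≤ pS x k - pS x τ := by
      have := (abs_le.mp hW).1; nlinarith
    have hupos : 0 < pS x t - pS x k := lt_of_lt_of_le (mul_pos hdpos hμσB) hulb
    have hsd : Real.sqrt ((t:ℝ) - k) > 0 := Real.sqrt_pos.mpr hdpos
    have hsdsq : Real.sqrt ((t:ℝ) - k) ^ 2 = (t:ℝ) - k := Real.sq_sqrt hdpos.le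
    have hsdg : Real.sqrt ((t:ℝ) - k) ≤ Real.sqrt ((t:ℝ) - τ) := Real.sqrt_le_sqrt hdg
    rw [glrW, hWτ, abs_of_pos hupos, div_le_div_iff₀ hsd hsg,
      show pS x t - pS x τ = (pS x t - pS x k) + (pS x k - pS x τ) by ring]
    exact case_post hσ hB hμeq hsd hsdg (by rw [hsdsq]; exact huub) hupos
      (by rw [hsdsq, hsgsq]
          have hrw : ((t:ℝ) - τ) - ((t:ℝ) - k) = (k:ℝ) - τ := by ring
          rw [hrw]; exact hwlb)

lemma yglr_eq {x : ℕ → ℝ} {t τ : ℕ} (hτt : τ < t)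
    (h : ∀ k, k < t → glrW x t k ≤ glrW x t τ) :
    Yglr x t = glrW x t τ := by
  have hne : Nonempty (Fin t) := ⟨⟨τ, hτt⟩⟩
  refine le_antisymm (ciSup_le fun k => h k k.2) ?_
  exact le_ciSup (f := fun k : Fin t => glrW x t (k : ℕ))
    (Set.Finite.bddAbove (Set.finite_range _)) ⟨τ, hτt⟩


lemma gauss_pdf_shift (c : ℝ) (v : ℝ≥0) (hv : v ≠ 0) (s x : ℝ) :
    rexp (s * x) * gaussianPDFReal c v x
      = rexp (s * c + s ^ 2 * v / 2) * gaussianPDFReal (c + s * v) v x := by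
  have hv' : (0:ℝ) < (v:ℝ) := by exact_mod_cast pos_iff_ne_zero.mpr hv
  simp only [gaussianPDFReal]
  rw [mul_left_comm, mul_left_comm (rexp _), ← Real.exp_add, ← Real.exp_add]
  congr 2
  field_simp
  ring

lemma integrable_exp_gaussianReal (c : ℝ) (v : ℝ≥0) (hv : v ≠ 0) (s : ℝ) :
    Integrable (fun x => rexp (s * x)) (gaussianReal c v) := by
  rw [gaussianReal_of_var_ne_zero _ hv]
  rw [integrable_withDensity_iff (measurable_gaussianPDF _ _)
    (Filter.Eventually.of_forall fun x => ENNReal.ofReal_lt_top)]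
  have : (fun x => rexp (s * x) * (gaussianPDF c v x).toReal)
      = fun x => rexp (s * c + s ^ 2 * v / 2) * gaussianPDFReal (c + s * v) v x := by
    funext x
    rw [gaussianPDF, ENNReal.toReal_ofReal (gaussianPDFReal_nonneg _ _ _), gauss_pdf_shift c v hv]
  rw [this]
  exact (integrable_gaussianPDFReal _ _).const_mul _

lemma integral_exp_gaussianReal (c : ℝ) (v : ℝ≥0) (hv : v ≠ 0) (s : ℝ) :
    ∫ x, rexp (s * x) ∂(gaussianReal c v) = rexp (s * c + s ^ 2 * v / 2) := by
  rw [gaussianReal_of_var_ne_zero _ hv]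
  have h1 : volume.withDensity (gaussianPDF c v)
      = volume.withDensity (fun x => ((gaussianPDFReal c v x).toNNReal : ℝ≥0∞)) := rfl
  rw [h1, integral_withDensity_eq_integral_smul
    (by exact (measurable_gaussianPDFReal c v).real_toNNReal)]
  have : (fun x => (gaussianPDFReal c v x).toNNReal • rexp (s * x))
      = fun x => rexp (s * c + s ^ 2 * v / 2) * gaussianPDFReal (c + s * v) v x := by
    funext x
    rw [NNReal.smul_def, Real.coe_toNNReal _ (gaussianPDFReal_nonneg _ _ _), smul_eq_mul,
      mul_comm, gauss_pdf_shift c v hv]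
  rw [this, integral_const_mul, integral_gaussianPDFReal_eq_one _ hv, mul_one]


lemma mgf_of_gaussian {Ω : Type*} [MeasurableSpace Ω] {P : Measure Ω} [IsProbabilityMeasure P] {Y : Ω → ℝ} (hY : Measurable Y)
    {c : ℝ} {v : ℝ≥0} (hv : v ≠ 0) (hmap : Measure.map Y P = gaussianReal c v) (s : ℝ) :
    Integrable (fun ω => rexp (s * Y ω)) P ∧ mgf Y P s = rexp (s * c + s ^ 2 * v / 2) := by
  have hg : AEStronglyMeasurable (fun x => rexp (s * x)) (Measure.map Y P) :=
    ((measurable_const.mul measurable_id).exp).aestronglyMeasurable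
  constructor
  · exact (integrable_map_measure hg hY.aemeasurable).mp
      (hmap ▸ integrable_exp_gaussianReal c v hv s)
  · rw [mgf, ← integral_map hY.aemeasurable hg, hmap, integral_exp_gaussianReal c v hv s]

lemma tail_of_mgf {Ω : Type*} [MeasurableSpace Ω] {P : Measure Ω} [IsProbabilityMeasure P] {Y : Ω → ℝ} {v : ℝ} (hv : 0 < v)
    (hint : ∀ s : ℝ, Integrable (fun ω => rexp (s * Y ω)) P)
    (hmgf : ∀ s : ℝ, mgf Y P s = rexp (s ^ 2 * v / 2)) {r : ℝ} (hr : 0 ≤ r) :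
    (P {ω | r ≤ |Y ω|}).toReal ≤ 2 * rexp (-r ^ 2 / (2 * v)) := by
  have ht : (0:ℝ) ≤ r / v := div_nonneg hr hv.le
  have hup : (P {ω | r ≤ Y ω}).toReal ≤ rexp (-r ^ 2 / (2 * v)) := by
    have := measure_ge_le_exp_mul_mgf (X := Y) (μ := P) r ht (hint (r / v))
    rw [hmgf, ← Real.exp_add] at this
    refine this.trans_eq (by congr 1; field_simp; ring)
  have hlow : (P {ω | Y ω ≤ -r}).toReal ≤ rexp (-r ^ 2 / (2 * v)) := by
    have ht' : -(r / v) ≤ 0 := neg_nonpos.mpr ht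
    have := measure_le_le_exp_mul_mgf (X := Y) (μ := P) (-r) ht' (hint (-(r / v)))
    rw [hmgf, ← Real.exp_add] at this
    refine this.trans_eq (by congr 1; field_simp; ring)
  have hsub : {ω | r ≤ |Y ω|} ⊆ {ω | r ≤ Y ω} ∪ {ω | Y ω ≤ -r} := by
    intro ω hω
    rcases abs_cases (Y ω) with ⟨h1, _⟩ | ⟨h1, _⟩
    · exact Or.inl (by simpa [Set.mem_setOf_eq, h1] using (h1 ▸ hω : r ≤ Y ω))
    · exact Or.inr (by simp only [Set.mem_setOf_eq] at hω ⊢; linarith [hω, h1])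
  calc (P {ω | r ≤ |Y ω|}).toReal
      ≤ ((P {ω | r ≤ Y ω}) + P {ω | Y ω ≤ -r}).toReal := by
        refine ENNReal.toReal_mono (by finiteness) ?_
        exact (measure_mono hsub).trans (measure_union_le _ _)
    _ = (P {ω | r ≤ Y ω}).toReal + (P {ω | Y ω ≤ -r}).toReal :=
        ENNReal.toReal_add (by finiteness) (by finiteness)
    _ ≤ 2 * rexp (-r ^ 2 / (2 * v)) := by linarith


/-- tail bound for a single post-change variable -/
lemma post_tail {Ω : Type*} [MeasurableSpace Ω] {P : Measure Ω} [IsProbabilityMeasure P] {X : Ω → ℝ} (hX : Measurable X)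
    {μ σ B : ℝ} (hσ : 0 < σ) (hB : 0 ≤ B)
    (hmap : Measure.map X P = gaussianReal μ ((σ ^ 2).toNNReal)) :
    (P {ω | σ * B ≤ |X ω - μ|}).toReal ≤ 2 * rexp (-B ^ 2 / 2) := by
  have hv0 : ((σ ^ 2).toNNReal : ℝ) = σ ^ 2 := Real.coe_toNNReal _ (sq_nonneg σ)
  have hvne : (σ ^ 2).toNNReal ≠ 0 := by
    refine ne_of_gt (Real.toNNReal_pos.mpr (by positivity))
  have hmap' : Measure.map (fun ω => X ω - μ) P = gaussianReal 0 ((σ ^ 2).toNNReal) := by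
    have hcomp : (fun ω => X ω - μ) = (fun x => x + (-μ)) ∘ X := by
      funext ω; simp [sub_eq_add_neg]
    rw [hcomp, ← Measure.map_map (measurable_add_const (-μ)) hX, hmap,
      gaussianReal_map_add_const]
    simp
  have hmeas : Measurable (fun ω => X ω - μ) := hX.sub measurable_const
  have h := fun s => mgf_of_gaussian hmeas hvne hmap' s
  have hbd := tail_of_mgf (v := σ ^ 2) (by positivity)
    (fun s => (h s).1)
    (fun s => by rw [(h s).2, hv0]; ring_nf)
    (r := σ * B) (by positivity)
  refine hbd.trans ?_
  have : -(σ * B) ^ 2 / (2 * σ ^ 2) = -B ^ 2 / 2 := by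
    field_simp
  rw [this]

/-- tail bound for a sum of pre-change variables -/
lemma presum_tail {Ω : Type*} [MeasurableSpace Ω] {P : Measure Ω} [IsProbabilityMeasure P] {T τ k : ℕ} (hk : k < τ) (hτ1 : 1 ≤ τ)
    (hτT : τ ≤ T) {X : ℕ → Ω → ℝ} (hX : ∀ i, Measurable (X i))
    (hInd : iIndepFun (fun i : ↥(Set.Icc 1 T) => X (i : ℕ)) P)
    (hpre : ∀ i, 1 ≤ i → i ≤ τ → Measure.map (X i) P = gaussianReal 0 1)
    {B : ℝ} (hB : 0 ≤ B) :
    (P {ω | Real.sqrt ((τ:ℝ) - k) * B ≤ |pS (fun i => X i ω) τ - pS (fun i => X i ω) k|}).toReal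
      ≤ 2 * rexp (-B ^ 2 / 2) := by
  classical
  set p : ℕ → Prop := fun n => n ∈ Set.Icc 1 T with hp
  have hpd : DecidablePred p := fun n => by
    rw [hp]; simp only [Set.mem_Icc]; infer_instance
  set s' : Finset ↥(Set.Icc 1 T) := (Finset.Ioc k τ).subtype p with hs'
  have hall : ∀ n ∈ Finset.Ioc k τ, p n := by
    intro n hn
    rw [Finset.mem_Ioc] at hn
    exact ⟨by omega, hn.2.trans hτT⟩
  have hepos : (0:ℝ) < (τ:ℝ) - k := by
    have : (k:ℝ) < τ := by exact_mod_cast hk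
    linarith
  have hmeas' : ∀ i : ↥(Set.Icc 1 T), Measurable (fun ω => X (i:ℕ) ω) := fun i => hX i
  have hmem : ∀ i : ↥(Set.Icc 1 T), i ∈ s' → (i:ℕ) ∈ Finset.Ioc k τ := by
    intro i hi
    rwa [hs', Finset.mem_subtype] at hi
  have hint_each : ∀ (u : ℝ) (i : ↥(Set.Icc 1 T)), i ∈ s' →
      Integrable (fun ω => rexp (u * X (i:ℕ) ω)) P := by
    intro u i hi
    have hm := Finset.mem_Ioc.mp (hmem i hi)
    exact (mgf_of_gaussian (hX _) one_ne_zero (hpre _ (by omega) hm.2) u).1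
  have hmgf_each : ∀ (u : ℝ) (i : ↥(Set.Icc 1 T)), i ∈ s' →
      mgf (fun ω => X (i:ℕ) ω) P u = rexp (u ^ 2 / 2) := by
    intro u i hi
    have hm := Finset.mem_Ioc.mp (hmem i hi)
    rw [(mgf_of_gaussian (hX _) one_ne_zero (hpre _ (by omega) hm.2) u).2]
    norm_num
  have hsum : (∑ i ∈ s', fun ω => X (i:ℕ) ω)
      = fun ω => ∑ n ∈ Finset.Ioc k τ, X n ω := by
    funext ω
    rw [Finset.sum_apply]
    exact Finset.sum_subtype_of_mem (fun n => X n ω) hall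
  have hcard : s'.card = τ - k := by
    rw [hs', Finset.card_subtype, Finset.filter_true_of_mem hall, Nat.card_Ioc]
  have hsetid : ∀ ω : Ω, pS (fun i => X i ω) τ - pS (fun i => X i ω) k
      = ∑ n ∈ Finset.Ioc k τ, X n ω := fun ω => pS_sub (fun i => X i ω) hk.le
  have hint : ∀ u : ℝ, Integrable (fun ω => rexp (u * (∑ n ∈ Finset.Ioc k τ, X n ω))) P := by
    intro u
    have := hInd.integrable_exp_mul_sum (t := u) hmeas' (hint_each u)
    rw [hsum] at this
    exact this
  have hmgf : ∀ u : ℝ, mgf (fun ω => ∑ n ∈ Finset.Ioc k τ, X n ω) P u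
      = rexp (u ^ 2 * ((τ:ℝ) - k) / 2) := by
    intro u
    rw [← hsum, hInd.mgf_sum hmeas' s']
    rw [Finset.prod_congr rfl (fun i hi => hmgf_each u i hi), Finset.prod_const,
      ← Real.exp_nat_mul, hcard]
    congr 1
    rw [Nat.cast_sub hk.le]
    ring
  have hres := tail_of_mgf (v := (τ:ℝ) - k) hepos hint hmgf
    (r := Real.sqrt ((τ:ℝ) - k) * B) (by positivity)
  have hsq : (Real.sqrt ((τ:ℝ) - k) * B) ^ 2 = ((τ:ℝ) - k) * B ^ 2 := by
    rw [mul_pow, Real.sq_sqrt hepos.le]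
  have hexp : -(Real.sqrt ((τ:ℝ) - k) * B) ^ 2 / (2 * ((τ:ℝ) - k)) = -B ^ 2 / 2 := by
    rw [hsq]; field_simp
  rw [hexp] at hres
  refine le_trans (le_of_eq ?_) hres
  congr 1
  apply congrArg
  ext ω
  simp only [Set.mem_setOf_eq, hsetid ω]


lemma core {σ μ : ℝ} (hσ : 0 < σ) (hμ : 0 < μ) {T τ t : ℕ}
    (hτ1 : 1 ≤ τ) (hτt : τ < t) (htT : t ≤ T)
    {Ω : Type} [MeasurableSpace Ω] {P : Measure Ω} [IsProbabilityMeasure P]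
    {X : ℕ → Ω → ℝ} (hX : ∀ i, Measurable (X i))
    (hInd : iIndepFun (fun i : ↥(Set.Icc 1 T) => X (i:ℕ)) P)
    (hpre : ∀ i, 1 ≤ i → i ≤ τ → Measure.map (X i) P = gaussianReal 0 1)
    (hpost : ∀ i, τ < i → i ≤ T → Measure.map (X i) P = gaussianReal μ ((σ^2).toNNReal)) :
    (P {ω | Yglr (fun i => X i ω) t ≠ glrW (fun i => X i ω) t τ}).toReal
      ≤ 4 * T * rexp (-(μ / (8 * (σ + 1))) ^ 2 / 2) := by
  set B : ℝ := μ / (8 * (σ + 1)) with hBdef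
  have hB : 0 < B := by rw [hBdef]; positivity
  have hμeq : μ = 8 * (σ + 1) * B := by rw [hBdef]; field_simp
  set c : ℝ := 2 * rexp (-B ^ 2 / 2) with hcdef
  have hc : 0 ≤ c := by positivity
  set q : ℝ≥0∞ := ENNReal.ofReal c with hqdef
  -- the union bound
  have hsub : {ω | Yglr (fun i => X i ω) t ≠ glrW (fun i => X i ω) t τ}
      ⊆ (⋃ i ∈ Finset.Ioc τ t, {ω | σ * B ≤ |X i ω - μ|})
        ∪ (⋃ k ∈ Finset.range τ,
            {ω | Real.sqrt ((τ:ℝ) - k) * B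
              ≤ |pS (fun i => X i ω) τ - pS (fun i => X i ω) k|}) := by
    intro ω hω
    by_contra hnot
    simp only [Set.mem_union, Set.mem_iUnion, not_or, not_exists, Set.mem_setOf_eq,
      Finset.mem_Ioc, Finset.mem_range, not_le] at hnot
    obtain ⟨hA, hC⟩ := hnot
    have h1 : ∀ i, τ < i → i ≤ t → |X i ω - μ| ≤ σ * B :=
      fun i hi1 hi2 => (hA i ⟨hi1, hi2⟩).le
    have h2 : ∀ k, k < τ →
        |pS (fun i => X i ω) τ - pS (fun i => X i ω) k| ≤ Real.sqrt ((τ:ℝ) - k) * B :=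
      fun k hk => (hC k hk).le
    exact hω (yglr_eq hτt (det_key hσ hB hμeq hτ1 hτt h1 h2))
  have hboundA : ∀ i ∈ Finset.Ioc τ t, P {ω | σ * B ≤ |X i ω - μ|} ≤ q := by
    intro i hi
    rw [Finset.mem_Ioc] at hi
    rw [hqdef, ENNReal.le_ofReal_iff_toReal_le (measure_ne_top _ _) hc]
    exact post_tail (hX i) hσ hB.le (hpost i hi.1 (hi.2.trans htT))
  have hboundC : ∀ k ∈ Finset.range τ,
      P {ω | Real.sqrt ((τ:ℝ) - k) * B
        ≤ |pS (fun i => X i ω) τ - pS (fun i => X i ω) k|} ≤ q := by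
    intro k hk
    rw [Finset.mem_range] at hk
    rw [hqdef, ENNReal.le_ofReal_iff_toReal_le (measure_ne_top _ _) hc]
    exact presum_tail hk hτ1 (hτt.le.trans htT) hX hInd hpre hB.le
  have hmain : P {ω | Yglr (fun i => X i ω) t ≠ glrW (fun i => X i ω) t τ}
      ≤ (T : ℝ≥0∞) * q := by
    refine le_trans (measure_mono hsub) ?_
    refine le_trans (measure_union_le _ _) ?_
    have e1 : P (⋃ i ∈ Finset.Ioc τ t, {ω | σ * B ≤ |X i ω - μ|})
        ≤ ∑ i ∈ Finset.Ioc τ t, P {ω | σ * B ≤ |X i ω - μ|} :=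
      measure_biUnion_finset_le _ _
    have e2 : P (⋃ k ∈ Finset.range τ,
        {ω | Real.sqrt ((τ:ℝ) - k) * B
          ≤ |pS (fun i => X i ω) τ - pS (fun i => X i ω) k|})
        ≤ ∑ k ∈ Finset.range τ, P {ω | Real.sqrt ((τ:ℝ) - k) * B
          ≤ |pS (fun i => X i ω) τ - pS (fun i => X i ω) k|} :=
      measure_biUnion_finset_le _ _
    have s1 : ∑ i ∈ Finset.Ioc τ t, P {ω | σ * B ≤ |X i ω - μ|}
        ≤ ((t - τ : ℕ) : ℝ≥0∞) * q := by
      refine le_trans (Finset.sum_le_sum hboundA) ?_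
      rw [Finset.sum_const, Nat.card_Ioc, nsmul_eq_mul]
    have s2 : ∑ k ∈ Finset.range τ, P {ω | Real.sqrt ((τ:ℝ) - k) * B
          ≤ |pS (fun i => X i ω) τ - pS (fun i => X i ω) k|}
        ≤ ((τ : ℕ) : ℝ≥0∞) * q := by
      refine le_trans (Finset.sum_le_sum hboundC) ?_
      rw [Finset.sum_const, Finset.card_range, nsmul_eq_mul]
    refine le_trans (add_le_add (e1.trans s1) (e2.trans s2)) ?_
    rw [← add_mul, ← Nat.cast_add]
    have : (t - τ) + τ = t := Nat.sub_add_cancel hτt.le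
    rw [this]
    exact mul_le_mul_left (by exact_mod_cast Nat.cast_le.mpr htT) _
  calc (P {ω | Yglr (fun i => X i ω) t ≠ glrW (fun i => X i ω) t τ}).toReal
      ≤ ((T : ℝ≥0∞) * q).toReal := ENNReal.toReal_mono (by finiteness) hmain
    _ = (T : ℝ) * c := by
        rw [hqdef, ENNReal.toReal_mul, ENNReal.toReal_ofReal hc, ENNReal.toReal_natCast]
    _ ≤ 4 * T * rexp (-B ^ 2 / 2) := by
        rw [hcdef]
        have hT0 : (0:ℝ) ≤ (T:ℝ) := Nat.cast_nonneg _
        nlinarith [Real.exp_pos (-B ^ 2 / 2)]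


/-- with μ_m → ∞, 𝒯_m → ∞, √(log 𝒯_m)/μ_m → 0, P(Y_t^GLR ≠ W_{t,τ}) tends to 0 uniformly in 1 ≤ τ < t ≤ 𝒯_m: the GLR maximum is attained at the change point. -/
theorem statement12 (σ : ℝ) (hσ : 0 < σ) (μs : ℕ → ℝ) (Ts : ℕ → ℕ)
    (hμ : Tendsto μs atTop atTop) (hT : Tendsto Ts atTop atTop)
    (hrate : Tendsto (fun m => Real.sqrt (Real.log (Ts m : ℝ)) / μs m) atTop (nhds 0)) :
    ∀ ε : ℝ, 0 < ε → ∃ M : ℕ, ∀ m : ℕ, M ≤ m →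
      ∀ τ t : ℕ, 1 ≤ τ → τ < t → t ≤ Ts m →
      ∀ (Ω : Type) [MeasurableSpace Ω] (P : Measure Ω) [IsProbabilityMeasure P]
        (X : ℕ → Ω → ℝ), (∀ i, Measurable (X i)) →
      iIndepFun (fun i : ↥(Set.Icc 1 (Ts m)) => X (i : ℕ)) P →
      (∀ i, 1 ≤ i → i ≤ τ → Measure.map (X i) P = gaussianReal 0 1) →
      (∀ i, τ < i → i ≤ Ts m → Measure.map (X i) P = gaussianReal (μs m) ((σ ^ 2).toNNReal)) →
      (P {ω | Yglr (fun i => X i ω) t ≠ glrW (fun i => X i ω) t τ}).toReal ≤ ε := by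
  intro ε hε
  set c : ℝ := 128 * (σ + 1) ^ 2 with hcdef
  have hc : 0 < c := by positivity
  -- the eventual bound
  have h1 : ∀ᶠ m in atTop, 1 ≤ μs m := hμ.eventually_ge_atTop 1
  have h2 : ∀ᶠ m in atTop, 1 ≤ Ts m := hT.eventually_ge_atTop 1
  have hδ : (0:ℝ) < Real.sqrt (1 / (2 * c)) := Real.sqrt_pos.mpr (by positivity)
  have h3 : ∀ᶠ m in atTop, Real.sqrt (Real.log (Ts m : ℝ)) / μs m
      < Real.sqrt (1 / (2 * c)) := hrate.eventually (gt_mem_nhds hδ)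
  have hsqtend : Tendsto (fun m => (μs m) ^ 2) atTop atTop := by
    have := hμ.atTop_mul_atTop₀ hμ
    refine this.congr (fun m => by ring)
  have htend : Tendsto (fun m => 4 * rexp (-(μs m) ^ 2 / (2 * c))) atTop (nhds 0) := by
    have harg : Tendsto (fun m => -(μs m) ^ 2 / (2 * c)) atTop atBot := by
      have h' : Tendsto (fun m => (μs m) ^ 2 / (2 * c)) atTop atTop :=
        hsqtend.atTop_div_const (by positivity)
      have := tendsto_neg_atTop_atBot.comp h'
      refine this.congr (fun m => by simp only [Function.comp_apply, neg_div])
    have := Real.tendsto_exp_atBot.comp harg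
    have h4 := this.const_mul (4:ℝ)
    simpa using h4
  have h4 : ∀ᶠ m in atTop, 4 * rexp (-(μs m) ^ 2 / (2 * c)) ≤ ε :=
    (htend.eventually (gt_mem_nhds hε)).mono (fun m hm => hm.le)
  have hall : ∀ᶠ m in atTop, (1 ≤ μs m ∧ 1 ≤ Ts m) ∧
      (Real.sqrt (Real.log (Ts m : ℝ)) / μs m < Real.sqrt (1 / (2 * c)) ∧
       4 * rexp (-(μs m) ^ 2 / (2 * c)) ≤ ε) := (h1.and h2).and (h3.and h4)
  obtain ⟨M, hM⟩ := eventually_atTop.mp hall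
  refine ⟨M, fun m hm τ t hτ1 hτt htT Ω _ P _ X hX hInd hpre hpost => ?_⟩
  obtain ⟨⟨hμ1, hT1⟩, hr, hεm⟩ := hM m hm
  have hμ0 : (0:ℝ) < μs m := lt_of_lt_of_le one_pos hμ1
  refine (core hσ hμ0 hτ1 hτt htT hX hInd hpre hpost).trans ?_
  -- show 4 * T * exp(-(μ/(8(σ+1)))^2/2) ≤ ε
  have hexp_eq : -((μs m) / (8 * (σ + 1))) ^ 2 / 2 = -(μs m) ^ 2 / c := by
    rw [hcdef]; field_simp; ring
  rw [hexp_eq]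
  have hlog0 : 0 ≤ Real.log (Ts m : ℝ) :=
    Real.log_nonneg (by exact_mod_cast hT1)
  have hsqrtlog : Real.sqrt (Real.log (Ts m : ℝ)) ≤ Real.sqrt (1 / (2 * c)) * μs m := by
    have := (div_lt_iff₀ hμ0).mp hr
    linarith
  have hlog : Real.log (Ts m : ℝ) ≤ (μs m) ^ 2 / (2 * c) := by
    have h5 : Real.log (Ts m : ℝ) = Real.sqrt (Real.log (Ts m : ℝ)) ^ 2 :=
      (Real.sq_sqrt hlog0).symm
    rw [h5]
    calc Real.sqrt (Real.log (Ts m : ℝ)) ^ 2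
        ≤ (Real.sqrt (1 / (2 * c)) * μs m) ^ 2 := by
          refine pow_le_pow_left₀ (Real.sqrt_nonneg _) hsqrtlog 2
      _ = (1 / (2 * c)) * (μs m) ^ 2 := by
          rw [mul_pow, Real.sq_sqrt (by positivity : (0:ℝ) ≤ 1 / (2 * c))]
      _ = (μs m) ^ 2 / (2 * c) := by ring
  have hTle : (Ts m : ℝ) ≤ rexp ((μs m) ^ 2 / (2 * c)) := by
    have hTpos : (0:ℝ) < (Ts m : ℝ) := by exact_mod_cast lt_of_lt_of_le one_pos hT1
    rw [← Real.exp_log hTpos]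
    exact Real.exp_le_exp.mpr hlog
  calc 4 * (Ts m : ℝ) * rexp (-(μs m) ^ 2 / c)
      ≤ 4 * rexp ((μs m) ^ 2 / (2 * c)) * rexp (-(μs m) ^ 2 / c) := by
        have := Real.exp_pos (-(μs m) ^ 2 / c)
        nlinarith
    _ = 4 * rexp (-(μs m) ^ 2 / (2 * c)) := by
        rw [mul_assoc, ← Real.exp_add]
        congr 2
        field_simp
        ring
    _ ≤ ε := hεm

end
end
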